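/- arXiv:2211.06693 — 3 statements merged into one kernel-verified Lean document; each statement's English description precedes it below -/
import Mathlib

section
/- Let d ≥ 1, M ≥ 1 be integers, p ∈ [1,∞] and k ≥ 0. There exists a constant C, depending only on p, k, M and d, such that for all families g = (g_1,…,g_M) and f = (f_1,…,f_M) of nonnegative measurable functions on ℝ^d with ‖g‖_{p,M,k+1} < ∞ and ‖f‖_{1,M,k+1} < ∞, one has ‖Q_m(g,f)‖_{p,k} ≤ C·‖g‖_{p,M,k+1}·‖f‖_{1,M,k+1} for every m = 1,…,M, and consequently ∑_{m=1}^M ‖Q_m(g,f)‖_{p,k} ≤ M·C·‖g‖_{p,M,k+1}·‖f‖_{1,M,k+1}. -/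
open MeasureTheory Real Filter
open scoped ENNReal NNReal

noncomputable section

/-- Euclidean space ℝ^d. -/
abbrev Euc (d : ℕ) := EuclideanSpace ℝ (Fin d)

/-- The Japanese bracket ⟨v⟩ = √(1+|v|²). -/
def jap {d : ℕ} (v : Euc d) : ℝ := Real.sqrt (1 + ‖v‖ ^ 2)

/-- The change of variables w' = (m·v − (m−n)·w)/n. -/
def cvar (d : ℕ) (m n : ℕ) (v w : Euc d) : Euc d :=
  ((n : ℝ))⁻¹ • ((m : ℝ) • v - ((m : ℝ) - (n : ℝ)) • w)

/-- The coagulation operator Q_m(g,f). -/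
def Qcoag (d M : ℕ) (g f : ℕ → Euc d → ℝ) (m : ℕ) (v : Euc d) : ℝ :=
  (∑ n ∈ Finset.Ico 1 m, ((m : ℝ) / (n : ℝ)) ^ 2 *
      ∫ w, g n (cvar d m n v w) * f (m - n) w * ‖v - w‖)
  - 2 * ∑ n ∈ Finset.Icc 1 M, g m v * ∫ w, f n w * ‖v - w‖

/-- The weighted L^p norm ‖h‖_{p,k} = ‖h ⟨·⟩^k‖_{L^p}. -/
def wnorm (d : ℕ) (p : ℝ≥0∞) (k : ℕ) (h : Euc d → ℝ) : ℝ≥0∞ :=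
  eLpNorm (fun v => h v * jap v ^ k) p volume

/-- Partial derivative in direction i. -/
def pd (d : ℕ) (i : Fin d) (h : Euc d → ℝ) (v : Euc d) : ℝ :=
  fderiv ℝ h v (EuclideanSpace.single i 1)

/-- Laplacian. -/
def lap (d : ℕ) (h : Euc d → ℝ) (v : Euc d) : ℝ :=
  ∑ i : Fin d, pd d i (fun w => pd d i h w) v

/-- div_v (v · h(v)). -/
def divVF (d : ℕ) (h : Euc d → ℝ) (v : Euc d) : ℝ :=
  ∑ i : Fin d, pd d i (fun w => w i * h w) v

/-- v · ∇φ(v). -/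
def vGrad (d : ℕ) (h : Euc d → ℝ) (v : Euc d) : ℝ :=
  ∑ i : Fin d, v i * pd d i h v

/-- A (nonnegative) classical solution of the spatially homogeneous coagulation
system ∂_t f_m = Δ f_m + div(v f_m) + Q_m(f,f) on [0,T]. -/
structure IsClassicalSolution (d M : ℕ) (T : ℝ) (f : ℕ → ℝ → Euc d → ℝ) : Prop where
  schwartz : ∀ m ∈ Finset.Icc 1 M, ∀ t ∈ Set.Icc (0 : ℝ) T,
    ∃ φ : SchwartzMap (Euc d) ℝ, ∀ v, f m t v = φ v
  cont : ∀ m ∈ Finset.Icc 1 M, ∀ n : ℕ,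
    ContinuousOn (fun p : ℝ × Euc d => iteratedFDeriv ℝ n (fun w => f m p.1 w) p.2)
      (Set.Icc 0 T ×ˢ Set.univ)
  pde : ∀ m ∈ Finset.Icc 1 M, ∀ t ∈ Set.Icc (0 : ℝ) T, ∀ v : Euc d,
    HasDerivWithinAt (fun s => f m s v)
      (lap d (fun w => f m t w) v + divVF d (fun w => f m t w) v +
        Qcoag d M (fun n => f n t) (fun n => f n t) m v)
      (Set.Icc 0 T) t


section AuxLemmas

variable {d : ℕ}

lemma jap_nonneg (v : Euc d) : 0 ≤ jap v := Real.sqrt_nonneg _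

lemma one_le_jap (v : Euc d) : 1 ≤ jap v := by
  have h : Real.sqrt 1 ≤ jap v := Real.sqrt_le_sqrt (by nlinarith [sq_nonneg ‖v‖])
  simpa using h

lemma measurable_jap : Measurable (jap (d := d)) := by
  unfold jap; fun_prop

lemma norm_add_le_jap_mul (u w : Euc d) : ‖u‖ + ‖w‖ ≤ jap u * jap w := by
  rw [jap, jap, ← Real.sqrt_mul (by positivity)]
  calc ‖u‖ + ‖w‖ = Real.sqrt ((‖u‖ + ‖w‖) ^ 2) := (Real.sqrt_sq (by positivity)).symm
    _ ≤ Real.sqrt ((1 + ‖u‖ ^ 2) * (1 + ‖w‖ ^ 2)) :=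
        Real.sqrt_le_sqrt (by nlinarith [sq_nonneg (‖u‖ * ‖w‖ - 1), norm_nonneg u, norm_nonneg w])

lemma jap_le_jap_mul {v u w : Euc d} (h : ‖v‖ ≤ ‖u‖ + ‖w‖) : jap v ≤ 2 * (jap u * jap w) := by
  have h2 : jap v ≤ Real.sqrt 4 * (jap u * jap w) := by
    rw [jap, jap, jap, ← Real.sqrt_mul (by positivity), ← Real.sqrt_mul (by positivity)]
    apply Real.sqrt_le_sqrt
    nlinarith [sq_nonneg (‖u‖ - ‖w‖), sq_nonneg (‖u‖ * ‖w‖), norm_nonneg u, norm_nonneg w,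
      norm_nonneg v, sq_nonneg ‖v‖, mul_nonneg (norm_nonneg u) (norm_nonneg w)]
  have h4 : Real.sqrt 4 = 2 := by
    rw [show (4:ℝ) = 2 ^ 2 by norm_num, Real.sqrt_sq (by norm_num)]
  rwa [h4] at h2

lemma key_ptwise {m n : ℕ} (h1 : 1 ≤ n) (h2 : n < m) (k : ℕ) (v w : Euc d) :
    ‖v - w‖ * jap v ^ k ≤ 2 ^ k * (jap (cvar d m n v w) ^ (k + 1) * jap w ^ (k + 1)) := by
  set u := cvar d m n v w with hu
  have hn0 : (n : ℝ) ≠ 0 := by positivity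
  have hm0 : (0 : ℝ) < m := by
    have : 0 < m := by omega
    exact_mod_cast this
  have hnu : (n : ℝ) • u = (m : ℝ) • v - ((m : ℝ) - (n : ℝ)) • w := by
    rw [hu, cvar, smul_inv_smul₀ hn0]
  have hvw : (m : ℝ) * ‖v - w‖ = (n : ℝ) * ‖u - w‖ := by
    have : (m : ℝ) • (v - w) = (n : ℝ) • (u - w) := by
      rw [smul_sub, smul_sub, hnu]; module
    have hnorm := congrArg norm this
    rwa [norm_smul, norm_smul, Real.norm_eq_abs, Real.norm_eq_abs,
      abs_of_nonneg (by positivity : (0:ℝ) ≤ (m:ℝ)),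
      abs_of_nonneg (by positivity : (0:ℝ) ≤ (n:ℝ))] at hnorm
  have hnm : (n : ℝ) ≤ (m : ℝ) := by exact_mod_cast h2.le
  have hv : ‖v‖ ≤ ‖u‖ + ‖w‖ := by
    have hmv : (m : ℝ) • v = (n : ℝ) • u + ((m : ℝ) - (n : ℝ)) • w := by
      rw [hnu]; module
    have : (m : ℝ) * ‖v‖ ≤ (n : ℝ) * ‖u‖ + ((m : ℝ) - (n : ℝ)) * ‖w‖ := by
      calc (m : ℝ) * ‖v‖ = ‖(m : ℝ) • v‖ := by
            rw [norm_smul, Real.norm_eq_abs, abs_of_nonneg hm0.le]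
        _ ≤ ‖(n : ℝ) • u‖ + ‖((m : ℝ) - (n : ℝ)) • w‖ := by rw [hmv]; exact norm_add_le _ _
        _ = (n : ℝ) * ‖u‖ + ((m : ℝ) - (n : ℝ)) * ‖w‖ := by
            rw [norm_smul, norm_smul, Real.norm_eq_abs, Real.norm_eq_abs,
              abs_of_nonneg (by positivity : (0:ℝ) ≤ (n:ℝ)),
              abs_of_nonneg (by linarith : (0:ℝ) ≤ (m : ℝ) - (n : ℝ))]
    have h3 : (n : ℝ) * ‖u‖ ≤ (m : ℝ) * ‖u‖ := by
      have := norm_nonneg u; nlinarith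
    have h4 : ((m : ℝ) - (n : ℝ)) * ‖w‖ ≤ (m : ℝ) * ‖w‖ := by
      have := norm_nonneg w; have : (0:ℝ) ≤ (n:ℝ) := by positivity
      nlinarith [norm_nonneg w]
    have h5 : (m : ℝ) * ‖v‖ ≤ (m : ℝ) * (‖u‖ + ‖w‖) := by nlinarith
    exact le_of_mul_le_mul_left (by linarith) hm0
  have hvw2 : ‖v - w‖ ≤ ‖u - w‖ := by
    have h6 : (n : ℝ) * ‖u - w‖ ≤ (m : ℝ) * ‖u - w‖ := by
      nlinarith [norm_nonneg (u - w)]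
    have h7 : (m : ℝ) * ‖v - w‖ ≤ (m : ℝ) * ‖u - w‖ := by rw [hvw]; exact h6
    exact le_of_mul_le_mul_left h7 hm0
  have hA : ‖v - w‖ ≤ jap u * jap w :=
    le_trans hvw2 (le_trans (norm_sub_le u w) (norm_add_le_jap_mul u w))
  have hB : jap v ≤ 2 * (jap u * jap w) := jap_le_jap_mul hv
  calc ‖v - w‖ * jap v ^ k ≤ (jap u * jap w) * (2 * (jap u * jap w)) ^ k := by
        apply mul_le_mul hA (pow_le_pow_left₀ (jap_nonneg v) hB k)
          (pow_nonneg (jap_nonneg v) k)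
          (mul_nonneg (jap_nonneg u) (jap_nonneg w))
    _ = 2 ^ k * (jap u ^ (k + 1) * jap w ^ (k + 1)) := by ring

lemma key_ptwise_loss (k : ℕ) (v w : Euc d) :
    ‖v - w‖ * jap v ^ k ≤ jap v ^ (k + 1) * jap w ^ (k + 1) := by
  have hA : ‖v - w‖ ≤ jap v * jap w :=
    le_trans (norm_sub_le v w) (norm_add_le_jap_mul v w)
  have hw1 : jap w ≤ jap w ^ (k + 1) := le_self_pow₀ (one_le_jap w) (Nat.succ_ne_zero k)
  calc ‖v - w‖ * jap v ^ k ≤ (jap v * jap w) * jap v ^ k := by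
        apply mul_le_mul_of_nonneg_right hA (pow_nonneg (jap_nonneg v) k)
    _ = jap v ^ (k + 1) * jap w := by ring
    _ ≤ jap v ^ (k + 1) * jap w ^ (k + 1) := by
        apply mul_le_mul_of_nonneg_left hw1 (pow_nonneg (jap_nonneg v) (k+1))

/-- An auxiliary `L^p` functional for `ℝ≥0∞`-valued functions. -/
def elp {α : Type*} [MeasurableSpace α] (p : ℝ≥0∞) (μ : Measure α) (F : α → ℝ≥0∞) : ℝ≥0∞ :=
  if p = ∞ then essSup F μ else (∫⁻ x, F x ^ p.toReal ∂μ) ^ (1 / p.toReal)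

variable {α : Type*} [MeasurableSpace α] {μ : Measure α} {p : ℝ≥0∞}

lemma one_le_toReal' (hp : 1 ≤ p) (htop : p ≠ ∞) : 1 ≤ p.toReal := by
  have := ENNReal.toReal_mono htop hp
  simpa using this

lemma eLpNorm_eq_elp (hp : p ≠ 0) (h : α → ℝ) :
    eLpNorm h p μ = elp p μ (fun x => (‖h x‖₊ : ℝ≥0∞)) := by
  by_cases htop : p = ∞
  · subst htop
    rw [eLpNorm_exponent_top, elp, if_pos rfl]
    rfl
  · rw [eLpNorm_eq_lintegral_rpow_enorm_toReal hp htop, elp, if_neg htop]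
    rfl

lemma elp_mono {F G : α → ℝ≥0∞} (h : ∀ x, F x ≤ G x) : elp p μ F ≤ elp p μ G := by
  unfold elp
  split
  · exact essSup_mono_ae (Filter.Eventually.of_forall h)
  · exact ENNReal.rpow_le_rpow
      (lintegral_mono fun x => ENNReal.rpow_le_rpow (h x) ENNReal.toReal_nonneg)
      (by positivity)

lemma elp_add_le (hp : 1 ≤ p) {F G : α → ℝ≥0∞} (hF : AEMeasurable F μ) (hG : AEMeasurable G μ) :
    elp p μ (fun x => F x + G x) ≤ elp p μ F + elp p μ G := by
  unfold elp
  split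
  case isTrue htop =>
    refine essSup_le_of_ae_le _ ?_
    filter_upwards [ENNReal.ae_le_essSup F, ENNReal.ae_le_essSup G] with x hx hy
    exact add_le_add hx hy
  case isFalse htop =>
    exact ENNReal.lintegral_Lp_add_le hF hG (one_le_toReal' hp htop)

lemma elp_const_mul (hp : 1 ≤ p) {F : α → ℝ≥0∞} (c : ℝ≥0∞) (hc : c ≠ ∞) :
    elp p μ (fun x => c * F x) = c * elp p μ F := by
  unfold elp
  split
  case isTrue htop => exact ENNReal.essSup_const_mul
  case isFalse htop =>
    have hq1 : 1 ≤ p.toReal := one_le_toReal' hp htop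
    have hq0 : p.toReal ≠ 0 := by linarith
    simp_rw [ENNReal.mul_rpow_of_nonneg _ _ (ENNReal.toReal_nonneg (a := p))]
    rw [lintegral_const_mul' _ _ (ENNReal.rpow_ne_top_of_nonneg ENNReal.toReal_nonneg hc),
      ENNReal.mul_rpow_of_nonneg _ _ (by positivity), ← ENNReal.rpow_mul,
      mul_one_div_cancel hq0, ENNReal.rpow_one]

lemma elp_zero_fn (hp : 1 ≤ p) : elp p μ (fun _ => (0 : ℝ≥0∞)) = 0 := by
  unfold elp
  split
  case isTrue htop => exact essSup_const_bot
  case isFalse htop =>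
    have hq1 : 1 ≤ p.toReal := one_le_toReal' hp htop
    rw [show (fun _ : α => (0:ℝ≥0∞) ^ p.toReal) = fun _ => 0 by
      funext x; exact ENNReal.zero_rpow_of_pos (by linarith)]
    rw [lintegral_zero, ENNReal.zero_rpow_of_pos (by positivity)]

lemma elp_sum_le (hp : 1 ≤ p) {ι : Type*} (s : Finset ι) (F : ι → α → ℝ≥0∞)
    (hF : ∀ i ∈ s, AEMeasurable (F i) μ) :
    elp p μ (fun x => ∑ i ∈ s, F i x) ≤ ∑ i ∈ s, elp p μ (F i) := by
  classical
  induction s using Finset.cons_induction with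
  | empty => simp [elp_zero_fn hp]
  | cons a s ha ih =>
    simp_rw [Finset.sum_cons]
    refine le_trans (elp_add_le hp (hF a (Finset.mem_cons_self a s))
      (Finset.aemeasurable_fun_sum s fun i hi => hF i (Finset.mem_cons_of_mem hi))) ?_
    exact add_le_add le_rfl (ih fun i hi => hF i (Finset.mem_cons_of_mem hi))

lemma lintegral_comp_smul_add_le (h : Euc d → ℝ≥0∞) (hm : Measurable h) {a : ℝ} (ha : 1 ≤ a)
    (c : Euc d) : ∫⁻ v, h (a • v + c) ∂volume ≤ ∫⁻ v, h v ∂volume := by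
  have ha0 : a ≠ 0 := by intro h0; rw [h0] at ha; norm_num at ha
  have h1 : ∫⁻ v, h (a • v + c) ∂volume
      = ∫⁻ y, h (y + c) ∂(Measure.map (a • ·) (volume : Measure (Euc d))) :=
    (lintegral_map (hm.comp (measurable_add_const c)) (measurable_const_smul a)).symm
  rw [h1, Measure.map_addHaar_smul volume ha0, lintegral_smul_measure,
    lintegral_add_right_eq_self (fun v => h v) c]
  calc ENNReal.ofReal |(a ^ Module.finrank ℝ (Euc d))⁻¹| * ∫⁻ v, h v ∂volume
      ≤ 1 * ∫⁻ v, h v ∂volume := by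
        apply mul_le_mul_left
        apply ENNReal.ofReal_le_one.2
        rw [abs_inv, abs_pow, abs_of_nonneg (by linarith)]
        apply inv_le_one_of_one_le₀
        exact one_le_pow₀ ha
    _ = ∫⁻ v, h v ∂volume := one_mul _

lemma elp_kernel (hp : 1 ≤ p) {a b : ℝ} (ha : 1 ≤ a) (hb : b ≠ 0)
    {ψ χ : Euc d → ℝ≥0∞} (hψ : Measurable ψ) (hχ : Measurable χ) (hI : ∫⁻ w, χ w ∂volume ≠ ∞) :
    elp p volume (fun v => ∫⁻ w, ψ (a • v - b • w) * χ w ∂volume)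
      ≤ (∫⁻ w, χ w ∂volume) * elp p volume ψ := by
  set I := ∫⁻ w, χ w ∂volume with hIdef
  have ha0 : a ≠ 0 := by intro h0; rw [h0] at ha; norm_num at ha
  have hTv : ∀ v : Euc d, Measurable (fun w : Euc d => a • v - b • w) := fun v =>
    (continuous_const.sub (continuous_id.const_smul b)).measurable
  have hTpair : Measurable (fun q : Euc d × Euc d => a • q.1 - b • q.2) :=
    ((continuous_fst.const_smul a).sub (continuous_snd.const_smul b)).measurable
  by_cases htop : p = ∞
  · subst htop
    rw [elp, if_pos rfl, elp, if_pos rfl]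
    refine essSup_le_of_ae_le _ (Filter.Eventually.of_forall fun v => ?_)
    have hae : ∀ᵐ w ∂(volume : Measure (Euc d)), ψ (a • v - b • w) ≤ essSup ψ volume := by
      have hqmp : Measure.QuasiMeasurePreserving (fun w : Euc d => a • v - b • w)
          volume volume := by
        have h2 : (fun w : Euc d => a • v - b • w)
            = (fun u : Euc d => a • v + u) ∘ (fun w : Euc d => (-b) • w) := by
          funext w; simp [Function.comp, sub_eq_add_neg, neg_smul]
        rw [h2]
        exact (measurePreserving_add_left volume (a • v)).quasiMeasurePreserving.comp
          (Measure.quasiMeasurePreserving_smul volume (neg_ne_zero.2 hb))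
      exact hqmp.ae (ENNReal.ae_le_essSup ψ)
    calc ∫⁻ w, ψ (a • v - b • w) * χ w ∂volume
        ≤ ∫⁻ w, essSup ψ volume * χ w ∂volume :=
          lintegral_mono_ae (hae.mono fun w hw => mul_le_mul_left hw _)
      _ = essSup ψ volume * I := lintegral_const_mul _ hχ
      _ = I * essSup ψ volume := mul_comm _ _
  · set q := p.toReal with hqdef
    have hq1 : 1 ≤ q := one_le_toReal' hp htop
    have hq0 : q ≠ 0 := by linarith
    have hqpos : 0 < q := by linarith
    rw [elp, if_neg htop, elp, if_neg htop]
    have jensen : ∀ v : Euc d, (∫⁻ w, ψ (a • v - b • w) * χ w ∂volume) ^ q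
        ≤ I ^ (q - 1) * ∫⁻ w, ψ (a • v - b • w) ^ q * χ w ∂volume := by
      intro v
      rcases eq_or_lt_of_le hq1 with h1 | h1
      · rw [← h1]; simp
      · set r := q / (q - 1) with hrdef
        have hqr : q.HolderConjugate r := Real.HolderConjugate.conjExponent h1
        have h1q : (0:ℝ) ≤ 1 / q := hqr.one_div_nonneg
        have h1r : (0:ℝ) ≤ 1 / r := hqr.symm.one_div_nonneg
        have hkey := ENNReal.lintegral_mul_le_Lp_mul_Lq volume hqr
          (f := fun w => ψ (a • v - b • w) * χ w ^ (1/q))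
          (g := fun w => χ w ^ (1/r))
          (((hψ.comp (hTv v))).mul (hχ.pow_const _)).aemeasurable
          (hχ.pow_const _).aemeasurable
        have heq1 : ∀ w : Euc d, ψ (a • v - b • w) * χ w ^ (1/q) * χ w ^ (1/r)
            = ψ (a • v - b • w) * χ w := by
          intro w
          rw [mul_assoc, ← ENNReal.rpow_add_of_nonneg _ _ h1q h1r,
            show (1:ℝ)/q + 1/r = 1 by rw [one_div, one_div]; exact hqr.inv_add_inv_eq_one,
            ENNReal.rpow_one]
        have heq2 : ∀ w : Euc d, (ψ (a • v - b • w) * χ w ^ (1/q)) ^ q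
            = ψ (a • v - b • w) ^ q * χ w := by
          intro w
          rw [ENNReal.mul_rpow_of_nonneg _ _ hqpos.le, ← ENNReal.rpow_mul,
            one_div_mul_cancel hq0, ENNReal.rpow_one]
        have heq3 : ∀ w : Euc d, (χ w ^ (1/r)) ^ r = χ w := by
          intro w
          rw [← ENNReal.rpow_mul, one_div_mul_cancel hqr.symm.ne_zero, ENNReal.rpow_one]
        simp only [Pi.mul_apply] at hkey
        simp_rw [heq1, heq2, heq3] at hkey
        calc (∫⁻ w, ψ (a • v - b • w) * χ w ∂volume) ^ q
            ≤ (((∫⁻ w, ψ (a • v - b • w) ^ q * χ w ∂volume) ^ (1/q)) * I ^ (1/r)) ^ q :=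
              ENNReal.rpow_le_rpow hkey hqpos.le
          _ = I ^ (q - 1) * ∫⁻ w, ψ (a • v - b • w) ^ q * χ w ∂volume := by
              rw [ENNReal.mul_rpow_of_nonneg _ _ hqpos.le, ← ENNReal.rpow_mul,
                ← ENNReal.rpow_mul, one_div_mul_cancel hq0, ENNReal.rpow_one]
              rw [show 1 / r * q = q - 1 by rw [hrdef]; field_simp]
              exact mul_comm _ _
    have hswap : ∫⁻ v, (∫⁻ w, ψ (a • v - b • w) ^ q * χ w ∂volume) ∂volume
        = ∫⁻ w, (∫⁻ v, ψ (a • v - b • w) ^ q ∂volume) * χ w ∂volume := by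
      rw [lintegral_lintegral_swap
        ((((hψ.comp hTpair).pow_const _).mul (hχ.comp measurable_snd)).aemeasurable)]
      congr 1
      funext w
      exact lintegral_mul_const _
        ((hψ.comp ((continuous_id.const_smul a).sub continuous_const).measurable).pow_const _)
    have hCoV : ∀ w : Euc d, ∫⁻ v, ψ (a • v - b • w) ^ q ∂volume
        ≤ ∫⁻ x, ψ x ^ q ∂volume := by
      intro w
      have := lintegral_comp_smul_add_le (fun x => ψ x ^ q) (hψ.pow_const _) ha (-(b • w))
      simpa [sub_eq_add_neg] using this
    have hIq : I ^ (q - 1) ≠ ∞ := ENNReal.rpow_ne_top_of_nonneg (by linarith) hI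
    set J := ∫⁻ x, ψ x ^ q ∂volume with hJdef
    calc (∫⁻ v, (∫⁻ w, ψ (a • v - b • w) * χ w ∂volume) ^ q ∂volume) ^ (1/q)
        ≤ (∫⁻ v, I ^ (q - 1) * ∫⁻ w, ψ (a • v - b • w) ^ q * χ w ∂volume ∂volume) ^ (1/q) :=
          ENNReal.rpow_le_rpow (lintegral_mono jensen) (by positivity)
      _ = (I ^ (q - 1) * ∫⁻ v, (∫⁻ w, ψ (a • v - b • w) ^ q * χ w ∂volume) ∂volume) ^ (1/q) := by
          rw [lintegral_const_mul' _ _ hIq]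
      _ = (I ^ (q - 1) * ∫⁻ w, (∫⁻ v, ψ (a • v - b • w) ^ q ∂volume) * χ w ∂volume) ^ (1/q) := by
          rw [hswap]
      _ ≤ (I ^ (q - 1) * ∫⁻ w, J * χ w ∂volume) ^ (1/q) := by
          apply ENNReal.rpow_le_rpow _ (by positivity)
          exact mul_le_mul_right (lintegral_mono fun w => mul_le_mul_left (hCoV w) _) _
      _ = (I ^ (q - 1) * (J * I)) ^ (1/q) := by
          rw [lintegral_const_mul _ hχ, ← hIdef]
      _ = (I ^ q * J) ^ (1/q) := by
          rw [show I ^ (q - 1) * (J * I) = (I ^ (q-1) * I ^ (1:ℝ)) * J by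
            rw [ENNReal.rpow_one]; ring,
            ← ENNReal.rpow_add_of_nonneg _ _ (by linarith) (by norm_num), sub_add_cancel]
      _ = I * J ^ (1/q) := by
          rw [ENNReal.mul_rpow_of_nonneg _ _ (by positivity), ← ENNReal.rpow_mul,
            mul_one_div_cancel hq0, ENNReal.rpow_one]

lemma ofReal_integral_le_lintegral {φ : Euc d → ℝ} (hφ : ∀ x, 0 ≤ φ x) :
    ENNReal.ofReal (∫ x, φ x) ≤ ∫⁻ x, ENNReal.ofReal (φ x) := by
  calc ENNReal.ofReal (∫ x, φ x) ≤ (‖∫ x, φ x‖₊ : ℝ≥0∞) := Real.ofReal_le_enorm _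
    _ ≤ ∫⁻ x, (‖φ x‖₊ : ℝ≥0∞) := enorm_integral_le_lintegral_enorm _
    _ = ∫⁻ x, ENNReal.ofReal (φ x) := lintegral_congr fun x => Real.enorm_eq_ofReal (hφ x)

end AuxLemmas


/-- boundedness of the coagulation operator on weighted L^p spaces:
‖Q_m(g,f)‖_{p,k} ≤ C ‖g‖_{p,M,k+1} ‖f‖_{1,M,k+1} and the summed version. -/
theorem statement0 (d M : ℕ) (hd : 1 ≤ d) (hM : 1 ≤ M) (p : ℝ≥0∞) (hp : 1 ≤ p) (k : ℕ) :
    ∃ C : ℝ≥0, ∀ g f : ℕ → Euc d → ℝ,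
      (∀ m ∈ Finset.Icc 1 M, Measurable (g m)) →
      (∀ m ∈ Finset.Icc 1 M, Measurable (f m)) →
      (∀ m ∈ Finset.Icc 1 M, ∀ v, 0 ≤ g m v) →
      (∀ m ∈ Finset.Icc 1 M, ∀ v, 0 ≤ f m v) →
      (∑ m ∈ Finset.Icc 1 M, wnorm d p (k + 1) (g m)) < ∞ →
      (∑ m ∈ Finset.Icc 1 M, wnorm d 1 (k + 1) (f m)) < ∞ →
      (∀ m ∈ Finset.Icc 1 M,
        wnorm d p k (Qcoag d M g f m) ≤
          (C : ℝ≥0∞) * (∑ m ∈ Finset.Icc 1 M, wnorm d p (k + 1) (g m)) *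
            (∑ m ∈ Finset.Icc 1 M, wnorm d 1 (k + 1) (f m))) ∧
      (∑ m ∈ Finset.Icc 1 M, wnorm d p k (Qcoag d M g f m)) ≤
        (M : ℝ≥0∞) * (C : ℝ≥0∞) * (∑ m ∈ Finset.Icc 1 M, wnorm d p (k + 1) (g m)) *
          (∑ m ∈ Finset.Icc 1 M, wnorm d 1 (k + 1) (f m)) := by
  classical
  refine ⟨2 ^ k * (M : ℝ≥0) ^ 3 + 2, fun g f hgm hfm hg0 hf0 hSg hSf => ?_⟩
  have hp0 : p ≠ 0 := by
    intro h; rw [h] at hp; exact (by norm_num : ¬ ((1:ℝ≥0∞) ≤ 0)) hp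
  set Sg := ∑ m ∈ Finset.Icc 1 M, wnorm d p (k + 1) (g m) with hSgdef
  set Sf := ∑ m ∈ Finset.Icc 1 M, wnorm d 1 (k + 1) (f m) with hSfdef
  set ψ : ℕ → Euc d → ℝ≥0∞ := fun n v => ENNReal.ofReal (g n v * jap v ^ (k + 1)) with hψdef
  set χ : ℕ → Euc d → ℝ≥0∞ := fun n w => ENNReal.ofReal (f n w * jap w ^ (k + 1)) with hχdef
  have hψm : ∀ n ∈ Finset.Icc 1 M, Measurable (ψ n) := fun n hn =>
    ((hgm n hn).mul (measurable_jap.pow_const _)).ennreal_ofReal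
  have hχm : ∀ n ∈ Finset.Icc 1 M, Measurable (χ n) := fun n hn =>
    ((hfm n hn).mul (measurable_jap.pow_const _)).ennreal_ofReal
  have hψE : ∀ n ∈ Finset.Icc 1 M, elp p volume (ψ n) = wnorm d p (k + 1) (g n) := by
    intro n hn
    rw [wnorm, eLpNorm_eq_elp hp0]
    congr 1
    funext v
    exact (Real.enorm_eq_ofReal
      (mul_nonneg (hg0 n hn v) (pow_nonneg (jap_nonneg v) _))).symm
  have hχE : ∀ n ∈ Finset.Icc 1 M, (∫⁻ w, χ n w ∂volume) = wnorm d 1 (k + 1) (f n) := by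
    intro n hn
    rw [wnorm, eLpNorm_one_eq_lintegral_enorm]
    exact (lintegral_congr fun w => Real.enorm_eq_ofReal
      (mul_nonneg (hf0 n hn w) (pow_nonneg (jap_nonneg w) _))).symm
  have hχle : ∀ n ∈ Finset.Icc 1 M, (∫⁻ w, χ n w ∂volume) ≤ Sf := by
    intro n hn
    rw [hχE n hn, hSfdef]
    exact Finset.single_le_sum (f := fun i => wnorm d 1 (k + 1) (f i))
      (fun i _ => zero_le) hn
  have hχfin : ∀ n ∈ Finset.Icc 1 M, (∫⁻ w, χ n w ∂volume) ≠ ∞ := fun n hn =>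
    ((hχle n hn).trans_lt hSf).ne
  have hψle : ∀ n ∈ Finset.Icc 1 M, elp p volume (ψ n) ≤ Sg := by
    intro n hn
    rw [hψE n hn, hSgdef]
    exact Finset.single_le_sum (f := fun i => wnorm d p (k + 1) (g i))
      (fun i _ => zero_le) hn
  have hχsum : ∑ n ∈ Finset.Icc 1 M, (∫⁻ w, χ n w ∂volume) = Sf :=
    Finset.sum_congr rfl hχE
  -- main per-m estimate
  have main : ∀ m ∈ Finset.Icc 1 M,
      wnorm d p k (Qcoag d M g f m) ≤
        ((2 ^ k * (M : ℝ≥0) ^ 3 + 2 : ℝ≥0) : ℝ≥0∞) * Sg * Sf := by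
    intro m hm
    obtain ⟨hm1, hmM⟩ := Finset.mem_Icc.1 hm
    have hmem : ∀ n ∈ Finset.Ico 1 m, n ∈ Finset.Icc 1 M := by
      intro n hn
      obtain ⟨h1, h2⟩ := Finset.mem_Ico.1 hn
      exact Finset.mem_Icc.2 ⟨h1, by omega⟩
    have hmem' : ∀ n ∈ Finset.Ico 1 m, m - n ∈ Finset.Icc 1 M := by
      intro n hn
      obtain ⟨h1, h2⟩ := Finset.mem_Ico.1 hn
      exact Finset.mem_Icc.2 ⟨by omega, by omega⟩
    set c : ℕ → ℝ≥0∞ := fun n => ENNReal.ofReal (((m:ℝ)/(n:ℝ))^2) * 2 ^ k with hcdef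
    have hcne : ∀ n, c n ≠ ∞ := fun n =>
      ENNReal.mul_ne_top ENNReal.ofReal_ne_top (by simp)
    set H : ℕ → Euc d → ℝ≥0∞ :=
      fun n v => ∫⁻ w, ψ n (cvar d m n v w) * χ (m - n) w ∂volume with hHdef
    have hHm : ∀ n ∈ Finset.Ico 1 m, Measurable (H n) := by
      intro n hn
      have hcv : Measurable fun q : Euc d × Euc d => cvar d m n q.1 q.2 := by
        unfold cvar; fun_prop
      exact (((hψm n (hmem n hn)).comp hcv).mul
        ((hχm (m - n) (hmem' n hn)).comp measurable_snd)).lintegral_prod_right'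

    -- pointwise bound
    have hpt : ∀ v, (‖Qcoag d M g f m v * jap v ^ k‖₊ : ℝ≥0∞) ≤
        (∑ n ∈ Finset.Ico 1 m, c n * H n v) + (2 * Sf) * ψ m v := by
      intro v
      set Ga := ∑ n ∈ Finset.Ico 1 m, ((m:ℝ)/(n:ℝ))^2 *
        ∫ w, g n (cvar d m n v w) * f (m - n) w * ‖v - w‖ with hGadef
      set Lo := 2 * ∑ n ∈ Finset.Icc 1 M, g m v * ∫ w, f n w * ‖v - w‖ with hLodef
      have hQeq : Qcoag d M g f m v = Ga - Lo := rfl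
      have hGa0 : 0 ≤ Ga := by
        apply Finset.sum_nonneg
        intro n hn
        apply mul_nonneg (sq_nonneg _)
        apply integral_nonneg
        intro w
        exact mul_nonneg (mul_nonneg (hg0 n (hmem n hn) _) (hf0 (m - n) (hmem' n hn) _))
          (norm_nonneg _)
      have hLo0 : 0 ≤ Lo := by
        apply mul_nonneg (by norm_num)
        apply Finset.sum_nonneg
        intro n hn
        apply mul_nonneg (hg0 m hm v)
        apply integral_nonneg
        intro w
        exact mul_nonneg (hf0 n hn w) (norm_nonneg _)
      have hjk : (0:ℝ) ≤ jap v ^ k := pow_nonneg (jap_nonneg v) k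
      have h0 : (‖Qcoag d M g f m v * jap v ^ k‖₊ : ℝ≥0∞)
          = ENNReal.ofReal (|Ga - Lo| * jap v ^ k) := by
        rw [hQeq, ← enorm_eq_nnnorm, Real.enorm_eq_ofReal_abs, abs_mul, abs_of_nonneg hjk]
      have habs : |Ga - Lo| ≤ Ga + Lo := abs_le.2 ⟨by linarith, by linarith⟩
      rw [h0]
      calc ENNReal.ofReal (|Ga - Lo| * jap v ^ k)
          ≤ ENNReal.ofReal ((Ga + Lo) * jap v ^ k) :=
            ENNReal.ofReal_le_ofReal (mul_le_mul_of_nonneg_right habs hjk)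
        _ = ENNReal.ofReal (Ga * jap v ^ k) + ENNReal.ofReal (Lo * jap v ^ k) := by
            rw [add_mul, ENNReal.ofReal_add (mul_nonneg hGa0 hjk) (mul_nonneg hLo0 hjk)]
        _ ≤ (∑ n ∈ Finset.Ico 1 m, c n * H n v) + (2 * Sf) * ψ m v := by
            apply add_le_add
            · -- gain bound
              rw [hGadef, Finset.sum_mul,
                ENNReal.ofReal_sum_of_nonneg (fun n hn => by
                  apply mul_nonneg _ hjk
                  apply mul_nonneg (sq_nonneg _)
                  apply integral_nonneg
                  intro w
                  exact mul_nonneg (mul_nonneg (hg0 n (hmem n hn) _)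
                    (hf0 (m - n) (hmem' n hn) _)) (norm_nonneg _))]
              apply Finset.sum_le_sum
              intro n hn
              obtain ⟨hn1, hn2⟩ := Finset.mem_Ico.1 hn
              have e1 : (((m:ℝ)/(n:ℝ))^2 * ∫ w, g n (cvar d m n v w) * f (m - n) w * ‖v - w‖)
                  * jap v ^ k
                  = ((m:ℝ)/(n:ℝ))^2 *
                    ∫ w, (g n (cvar d m n v w) * f (m - n) w * ‖v - w‖) * jap v ^ k := by
                rw [mul_assoc, ← integral_mul_const]
              rw [e1, ENNReal.ofReal_mul (sq_nonneg _)]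
              have e2 : ENNReal.ofReal
                  (∫ w, (g n (cvar d m n v w) * f (m - n) w * ‖v - w‖) * jap v ^ k)
                  ≤ 2 ^ k * H n v := by
                refine le_trans (ofReal_integral_le_lintegral (fun w => by
                  apply mul_nonneg _ hjk
                  exact mul_nonneg (mul_nonneg (hg0 n (hmem n hn) _)
                    (hf0 (m - n) (hmem' n hn) _)) (norm_nonneg _))) ?_
                rw [hHdef]
                simp only []
                rw [← lintegral_const_mul' _ _ (by simp : (2:ℝ≥0∞)^k ≠ ∞)]
                apply lintegral_mono
                intro w
                set u := cvar d m n v w with hudef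
                have hre : (g n u * f (m - n) w * ‖v - w‖) * jap v ^ k
                    ≤ (2:ℝ)^k * ((g n u * jap u ^ (k+1)) * (f (m - n) w * jap w ^ (k+1))) := by
                  have hk2 := key_ptwise hn1 hn2 k v w
                  have hgf0 : 0 ≤ g n u * f (m - n) w :=
                    mul_nonneg (hg0 n (hmem n hn) _) (hf0 (m - n) (hmem' n hn) _)
                  calc (g n u * f (m - n) w * ‖v - w‖) * jap v ^ k
                      = (g n u * f (m - n) w) * (‖v - w‖ * jap v ^ k) := by ring
                    _ ≤ (g n u * f (m - n) w) *
                        (2^k * (jap u ^ (k+1) * jap w ^ (k+1))) :=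
                        mul_le_mul_of_nonneg_left hk2 hgf0
                    _ = (2:ℝ)^k * ((g n u * jap u ^ (k+1)) * (f (m - n) w * jap w ^ (k+1))) := by
                        ring
                calc ENNReal.ofReal ((g n u * f (m - n) w * ‖v - w‖) * jap v ^ k)
                    ≤ ENNReal.ofReal ((2:ℝ)^k *
                        ((g n u * jap u ^ (k+1)) * (f (m - n) w * jap w ^ (k+1)))) :=
                      ENNReal.ofReal_le_ofReal hre
                  _ = 2^k * (ψ n u * χ (m - n) w) := by
                      rw [ENNReal.ofReal_mul (by positivity),
                        ENNReal.ofReal_mul (mul_nonneg (hg0 n (hmem n hn) _)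
                          (pow_nonneg (jap_nonneg u) _))]
                      congr 1
                      rw [ENNReal.ofReal_pow (by norm_num)]
                      norm_num
              have e5 : c n * H n v
                  = ENNReal.ofReal (((m:ℝ)/(n:ℝ))^2) * (2^k * H n v) := by
                rw [hcdef]; ring
              rw [e5]
              exact mul_le_mul_right e2 _
            · -- loss bound
              rw [hLodef]
              have e1 : (2 * ∑ n ∈ Finset.Icc 1 M, g m v * ∫ w, f n w * ‖v - w‖) * jap v ^ k
                  = 2 * ∑ n ∈ Finset.Icc 1 M,
                    (g m v * ∫ w, f n w * ‖v - w‖) * jap v ^ k := by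
                rw [mul_assoc, Finset.sum_mul]
              rw [e1, ENNReal.ofReal_mul (by norm_num : (0:ℝ) ≤ 2)]
              rw [ENNReal.ofReal_ofNat]
              have e2 : ENNReal.ofReal (∑ n ∈ Finset.Icc 1 M,
                  (g m v * ∫ w, f n w * ‖v - w‖) * jap v ^ k) ≤ Sf * ψ m v := by
                rw [ENNReal.ofReal_sum_of_nonneg (fun n hn => by
                  apply mul_nonneg _ hjk
                  apply mul_nonneg (hg0 m hm v)
                  apply integral_nonneg
                  intro w
                  exact mul_nonneg (hf0 n hn w) (norm_nonneg _))]
                have e3 : ∀ n ∈ Finset.Icc 1 M,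
                    ENNReal.ofReal ((g m v * ∫ w, f n w * ‖v - w‖) * jap v ^ k)
                      ≤ ψ m v * (∫⁻ w, χ n w ∂volume) := by
                  intro n hn
                  have e4 : (g m v * ∫ w, f n w * ‖v - w‖) * jap v ^ k
                      = ∫ w, (g m v * (f n w * ‖v - w‖)) * jap v ^ k := by
                    rw [← integral_const_mul, ← integral_mul_const]
                  rw [e4]
                  refine le_trans (ofReal_integral_le_lintegral (fun w => by
                    apply mul_nonneg _ hjk
                    exact mul_nonneg (hg0 m hm v)
                      (mul_nonneg (hf0 n hn w) (norm_nonneg _)))) ?_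
                  rw [← lintegral_const_mul' _ _ ENNReal.ofReal_ne_top]
                  apply lintegral_mono
                  intro w
                  have hre : (g m v * (f n w * ‖v - w‖)) * jap v ^ k
                      ≤ (g m v * jap v ^ (k+1)) * (f n w * jap w ^ (k+1)) := by
                    have hk2 := key_ptwise_loss k v w
                    have hgf0 : 0 ≤ g m v * f n w := mul_nonneg (hg0 m hm v) (hf0 n hn w)
                    calc (g m v * (f n w * ‖v - w‖)) * jap v ^ k
                        = (g m v * f n w) * (‖v - w‖ * jap v ^ k) := by ring
                      _ ≤ (g m v * f n w) * (jap v ^ (k+1) * jap w ^ (k+1)) :=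
                          mul_le_mul_of_nonneg_left hk2 hgf0
                      _ = (g m v * jap v ^ (k+1)) * (f n w * jap w ^ (k+1)) := by ring
                  calc ENNReal.ofReal ((g m v * (f n w * ‖v - w‖)) * jap v ^ k)
                      ≤ ENNReal.ofReal ((g m v * jap v ^ (k+1)) * (f n w * jap w ^ (k+1))) :=
                        ENNReal.ofReal_le_ofReal hre
                    _ = ψ m v * χ n w := ENNReal.ofReal_mul
                        (mul_nonneg (hg0 m hm v) (pow_nonneg (jap_nonneg v) _))
                refine le_trans (Finset.sum_le_sum e3) ?_
                rw [← Finset.mul_sum, hχsum, mul_comm]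
              refine le_trans (mul_le_mul_right e2 2) (le_of_eq (by ring))
    -- eLp chain
    have h1 : wnorm d p k (Qcoag d M g f m) ≤
        elp p volume (fun v => (∑ n ∈ Finset.Ico 1 m, c n * H n v) + (2 * Sf) * ψ m v) := by
      rw [wnorm, eLpNorm_eq_elp hp0]
      exact elp_mono hpt
    have h2 : elp p volume (fun v => (∑ n ∈ Finset.Ico 1 m, c n * H n v) + (2 * Sf) * ψ m v)
        ≤ (∑ n ∈ Finset.Ico 1 m, c n * elp p volume (H n)) + (2 * Sf) * elp p volume (ψ m) := by
      refine le_trans (elp_add_le hp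
        (Finset.aemeasurable_fun_sum _ (fun n hn => ((hHm n hn).const_mul (c n)).aemeasurable))
        (((hψm m hm).const_mul (2 * Sf)).aemeasurable)) ?_
      apply add_le_add
      · refine le_trans (elp_sum_le hp _ _
          (fun n hn => ((hHm n hn).const_mul (c n)).aemeasurable)) ?_
        apply Finset.sum_le_sum
        intro n hn
        exact le_of_eq (elp_const_mul hp (c n) (hcne n))
      · exact le_of_eq (elp_const_mul hp (2 * Sf)
          (ENNReal.mul_ne_top (by norm_num) hSf.ne))
    have h3 : ∀ n ∈ Finset.Ico 1 m, elp p volume (H n) ≤ Sf * Sg := by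
      intro n hn
      obtain ⟨hn1, hn2⟩ := Finset.mem_Ico.1 hn
      have hn0 : (n:ℝ) ≠ 0 := by positivity
      set a := (m:ℝ) / (n:ℝ) with hadef
      set b := ((m:ℝ) - (n:ℝ)) / (n:ℝ) with hbdef
      have hcv : ∀ v w : Euc d, cvar d m n v w = a • v - b • w := by
        intro v w
        rw [cvar, smul_sub, smul_smul, smul_smul, hadef, hbdef, inv_mul_eq_div, inv_mul_eq_div]
      have ha : 1 ≤ a := by
        rw [hadef]
        rw [le_div_iff₀ (by positivity : (0:ℝ) < (n:ℝ)), one_mul]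
        exact_mod_cast hn2.le
      have hb : b ≠ 0 := by
        rw [hbdef]
        apply div_ne_zero _ hn0
        have : (n:ℝ) < (m:ℝ) := by exact_mod_cast hn2
        linarith
      have hHeq : H n = fun v => ∫⁻ w, ψ n (a • v - b • w) * χ (m - n) w ∂volume := by
        funext v
        rw [hHdef]
        exact lintegral_congr fun w => by rw [hcv v w]
      rw [hHeq]
      refine le_trans (elp_kernel hp ha hb (hψm n (hmem n hn)) (hχm (m - n) (hmem' n hn))
        (hχfin (m - n) (hmem' n hn))) ?_
      exact mul_le_mul' (hχle (m - n) (hmem' n hn)) (hψle n (hmem n hn))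
    have hc_le : ∀ n ∈ Finset.Ico 1 m, c n ≤ (M:ℝ≥0∞)^2 * 2^k := by
      intro n hn
      obtain ⟨hn1, hn2⟩ := Finset.mem_Ico.1 hn
      rw [hcdef]
      apply mul_le_mul_left
      have h5 : ((m:ℝ)/(n:ℝ))^2 ≤ (M:ℝ)^2 := by
        apply pow_le_pow_left₀ (by positivity)
        calc (m:ℝ)/(n:ℝ) ≤ (m:ℝ) := by
              apply div_le_self (by positivity)
              exact_mod_cast hn1
          _ ≤ (M:ℝ) := by exact_mod_cast hmM
      calc ENNReal.ofReal (((m:ℝ)/(n:ℝ))^2) ≤ ENNReal.ofReal ((M:ℝ)^2) :=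
            ENNReal.ofReal_le_ofReal h5
        _ = (M:ℝ≥0∞)^2 := by
            rw [ENNReal.ofReal_pow (by positivity), ENNReal.ofReal_natCast]
    -- combine
    have h6 : (∑ n ∈ Finset.Ico 1 m, c n * elp p volume (H n))
        ≤ (2^k * (M:ℝ≥0∞)^3) * (Sg * Sf) := by
      calc ∑ n ∈ Finset.Ico 1 m, c n * elp p volume (H n)
          ≤ ∑ n ∈ Finset.Ico 1 m, ((M:ℝ≥0∞)^2 * 2^k) * (Sf * Sg) :=
            Finset.sum_le_sum fun n hn => mul_le_mul' (hc_le n hn) (h3 n hn)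
        _ = (Finset.Ico 1 m).card • (((M:ℝ≥0∞)^2 * 2^k) * (Sf * Sg)) := by
            rw [Finset.sum_const]
        _ = ((m - 1 : ℕ) : ℝ≥0∞) * (((M:ℝ≥0∞)^2 * 2^k) * (Sf * Sg)) := by
            rw [Nat.card_Ico, nsmul_eq_mul]
        _ ≤ ((M : ℕ) : ℝ≥0∞) * (((M:ℝ≥0∞)^2 * 2^k) * (Sf * Sg)) := by
            apply mul_le_mul_left
            exact_mod_cast Nat.cast_le.2 (by omega : m - 1 ≤ M)
        _ = (2^k * (M:ℝ≥0∞)^3) * (Sg * Sf) := by push_cast; ring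
    have h7 : (2 * Sf) * elp p volume (ψ m) ≤ 2 * (Sg * Sf) := by
      calc (2 * Sf) * elp p volume (ψ m) ≤ (2 * Sf) * Sg :=
            mul_le_mul_right (hψle m hm) _
        _ = 2 * (Sg * Sf) := by ring
    calc wnorm d p k (Qcoag d M g f m)
        ≤ (∑ n ∈ Finset.Ico 1 m, c n * elp p volume (H n)) + (2 * Sf) * elp p volume (ψ m) :=
          le_trans h1 h2
      _ ≤ (2^k * (M:ℝ≥0∞)^3) * (Sg * Sf) + 2 * (Sg * Sf) := add_le_add h6 h7
      _ = ((2 ^ k * (M : ℝ≥0) ^ 3 + 2 : ℝ≥0) : ℝ≥0∞) * Sg * Sf := by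
          push_cast
          ring
  refine ⟨main, ?_⟩
  calc ∑ m ∈ Finset.Icc 1 M, wnorm d p k (Qcoag d M g f m)
      ≤ ∑ _m ∈ Finset.Icc 1 M,
        ((2 ^ k * (M : ℝ≥0) ^ 3 + 2 : ℝ≥0) : ℝ≥0∞) * Sg * Sf :=
        Finset.sum_le_sum main
    _ = (M : ℝ≥0∞) * ((2 ^ k * (M : ℝ≥0) ^ 3 + 2 : ℝ≥0) : ℝ≥0∞) * Sg * Sf := by
        rw [Finset.sum_const, Nat.card_Icc, nsmul_eq_mul]
        push_cast
        ring
end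
end

section
/- Let d ≥ 1, M ≥ 1 be integers and let f_1,…,f_M : ℝ^d → [0,∞) be measurable functions with ∫_{ℝ^d} f_n(w)⟨w⟩ dw < ∞ for every n. Then ∑_{m=1}^{M} ∑_{n=1}^{m−1} m ∬_{ℝ^d×ℝ^d} f_n(w) f_{m−n}(w') |w − w'| dw dw' ≤ 2 ∑_{m=1}^{M} ∑_{n=1}^{M} m ∬_{ℝ^d×ℝ^d} f_m(v) f_n(w) |v − w| dv dw; equivalently, ∑_{m=1}^M m ∫_{ℝ^d} Q_m(f,f)(v) dv ≤ 0. -/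
open MeasureTheory Real Filter
open scoped ENNReal NNReal

noncomputable section

namespace Coag

lemma jap_nonneg {d : ℕ} (v : Euc d) : 0 ≤ jap v := Real.sqrt_nonneg _

lemma one_le_jap {d : ℕ} (v : Euc d) : 1 ≤ jap v := by
  have : (1:ℝ) = Real.sqrt 1 := by simp
  rw [this, jap]
  exact Real.sqrt_le_sqrt (by nlinarith [sq_nonneg ‖v‖])

lemma norm_le_jap {d : ℕ} (v : Euc d) : ‖v‖ ≤ jap v := by
  have : ‖v‖ = Real.sqrt (‖v‖ ^ 2) := by
    rw [Real.sqrt_sq (norm_nonneg v)]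
  rw [this, jap]
  exact Real.sqrt_le_sqrt (by linarith)

lemma norm_sub_le_two_jap {d : ℕ} (v w : Euc d) : ‖v - w‖ ≤ 2 * (jap v * jap w) := by
  have h1 := norm_le_jap v
  have h2 := norm_le_jap w
  have h3 := one_le_jap v
  have h4 := one_le_jap w
  calc ‖v - w‖ ≤ ‖v‖ + ‖w‖ := norm_sub_le v w
    _ ≤ jap v + jap w := add_le_add h1 h2
    _ ≤ jap v * jap w + jap w * jap v := by nlinarith
    _ = 2 * (jap v * jap w) := by ring

lemma ofReal_bound {d : ℕ} {a b : ℝ} (ha : 0 ≤ a) (hb : 0 ≤ b) (x y : Euc d) :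
    ENNReal.ofReal (a * b * ‖x - y‖)
      ≤ 2 * (ENNReal.ofReal (a * jap x) * ENNReal.ofReal (b * jap y)) := by
  have key : a * b * ‖x - y‖ ≤ 2 * ((a * jap x) * (b * jap y)) := by
    have h := norm_sub_le_two_jap x y
    have h1 := jap_nonneg x
    have h2 := jap_nonneg y
    have hn := norm_nonneg (x - y)
    nlinarith [mul_nonneg ha hb]
  calc ENNReal.ofReal (a * b * ‖x - y‖) ≤ ENNReal.ofReal (2 * ((a * jap x) * (b * jap y))) :=
        ENNReal.ofReal_le_ofReal key
    _ = 2 * (ENNReal.ofReal (a * jap x) * ENNReal.ofReal (b * jap y)) := by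
        rw [ENNReal.ofReal_mul (by norm_num), ENNReal.ofReal_mul (mul_nonneg ha (jap_nonneg x))]
        norm_num

lemma double_lt_top {d : ℕ} (a b : Euc d → ℝ) (ha0 : ∀ v, 0 ≤ a v) (hb0 : ∀ v, 0 ≤ b v)
    (hma : (∫⁻ w, ENNReal.ofReal (a w * jap w)) < ∞)
    (hmb : (∫⁻ w, ENNReal.ofReal (b w * jap w)) < ∞) :
    (∫⁻ v, ∫⁻ w, ENNReal.ofReal (a v * b w * ‖v - w‖)) < ∞ := by
  set A : ℝ≥0∞ := ∫⁻ w, ENNReal.ofReal (a w * jap w) with hA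
  set B : ℝ≥0∞ := ∫⁻ w, ENNReal.ofReal (b w * jap w) with hB
  have step1 : (∫⁻ v, ∫⁻ w, ENNReal.ofReal (a v * b w * ‖v - w‖))
      ≤ ∫⁻ v, (2 * ENNReal.ofReal (a v * jap v)) * B := by
    refine lintegral_mono fun v => ?_
    calc (∫⁻ w, ENNReal.ofReal (a v * b w * ‖v - w‖))
        ≤ ∫⁻ w, (2 * ENNReal.ofReal (a v * jap v)) * ENNReal.ofReal (b w * jap w) := by
          refine lintegral_mono fun w => ?_
          calc ENNReal.ofReal (a v * b w * ‖v - w‖)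
              ≤ 2 * (ENNReal.ofReal (a v * jap v) * ENNReal.ofReal (b w * jap w)) :=
                ofReal_bound (ha0 v) (hb0 w) v w
            _ = (2 * ENNReal.ofReal (a v * jap v)) * ENNReal.ofReal (b w * jap w) := by ring
      _ = (2 * ENNReal.ofReal (a v * jap v)) * B :=
          lintegral_const_mul' _ _ (by finiteness)
  have step2 : (∫⁻ v, (2 * ENNReal.ofReal (a v * jap v)) * B)
      = 2 * B * A := by
    have : ∀ v, (2 * ENNReal.ofReal (a v * jap v)) * B
        = (2 * B) * ENNReal.ofReal (a v * jap v) := fun v => by ring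
    simp_rw [this]
    rw [lintegral_const_mul' _ _ (by simp [ENNReal.mul_eq_top, hmb.ne]), hA]
  refine lt_of_le_of_lt (step1.trans step2.le) ?_
  exact ENNReal.mul_lt_top (ENNReal.mul_lt_top (by norm_num) hmb) hma

lemma K_le {d : ℕ} (b : Euc d → ℝ) (hb0 : ∀ v, 0 ≤ b v) (v : Euc d) :
    (∫⁻ w, ENNReal.ofReal (b w * ‖v - w‖))
      ≤ (2 * ENNReal.ofReal (jap v)) * ∫⁻ w, ENNReal.ofReal (b w * jap w) := by
  rw [← lintegral_const_mul' _ _ (by finiteness)]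
  refine lintegral_mono fun w => ?_
  have key : b w * ‖v - w‖ ≤ 2 * jap v * (b w * jap w) := by
    have h := norm_sub_le_two_jap v w
    have h1 := jap_nonneg v
    have h2 := jap_nonneg w
    nlinarith [hb0 w, norm_nonneg (v - w)]
  calc ENNReal.ofReal (b w * ‖v - w‖) ≤ ENNReal.ofReal (2 * jap v * (b w * jap w)) :=
        ENNReal.ofReal_le_ofReal key
    _ = 2 * ENNReal.ofReal (jap v) * ENNReal.ofReal (b w * jap w) := by
        rw [ENNReal.ofReal_mul (by have := jap_nonneg v; linarith),
          ENNReal.ofReal_mul (by norm_num)]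
        norm_num
    _ = 2 * ENNReal.ofReal (jap v) * ENNReal.ofReal (b w * jap w) := rfl

lemma lintegral_cvar {d : ℕ} (hd : 1 ≤ d) {m n : ℕ} (h1 : 1 ≤ n) (h2 : n < m)
    (g : Euc d → ℝ≥0∞) (hg : Measurable g) (w : Euc d) :
    ENNReal.ofReal (((m : ℝ) / n) ^ 2) *
        ∫⁻ v, g (cvar d m n v w) * ENNReal.ofReal ‖v - w‖
      ≤ ∫⁻ u, g u * ENNReal.ofReal ‖u - w‖ := by
  set c : ℝ := (m : ℝ) / n with hc
  have hn0 : (0:ℝ) < n := by exact_mod_cast h1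
  have hm0 : (0:ℝ) < m := by
    have h0 : 0 < m := by omega
    exact_mod_cast h0
  have hc0 : 0 < c := by positivity
  have hc1 : 1 ≤ c := by
    rw [hc, le_div_iff₀ hn0]
    norm_num
    exact_mod_cast h2.le
  have hcv : ∀ v : Euc d, cvar d m n v w = c • v + (w - c • w) := by
    intro v
    rw [cvar, smul_sub, smul_smul, smul_smul]
    have e1 : (n:ℝ)⁻¹ * m = c := by rw [hc, inv_mul_eq_div]
    have e2 : (n:ℝ)⁻¹ * ((m:ℝ) - n) = c - 1 := by
      rw [hc, inv_mul_eq_div, sub_div, div_self hn0.ne']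
    rw [e1, e2, sub_smul, one_smul]
    abel
  have hdiff : ∀ v : Euc d, cvar d m n v w - w = c • (v - w) := by
    intro v
    rw [hcv v, smul_sub]
    abel
  have hnorm : ∀ v : Euc d, ENNReal.ofReal ‖v - w‖
      = ENNReal.ofReal c⁻¹ * ENNReal.ofReal ‖cvar d m n v w - w‖ := by
    intro v
    rw [hdiff v, norm_smul, Real.norm_eq_abs, abs_of_pos hc0,
      ENNReal.ofReal_mul (by positivity), ← mul_assoc,
      ← ENNReal.ofReal_mul (by positivity), inv_mul_cancel₀ hc0.ne', ENNReal.ofReal_one, one_mul]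
  set H : Euc d → ℝ≥0∞ := fun u => g u * ENNReal.ofReal ‖u - w‖ with hH
  have hHmeas : Measurable H := by
    exact hg.mul ((measurable_id.sub measurable_const).norm.ennreal_ofReal)
  have step1 : (∫⁻ v, g (cvar d m n v w) * ENNReal.ofReal ‖v - w‖)
      = ENNReal.ofReal c⁻¹ * ∫⁻ v, H (c • v + (w - c • w)) := by
    rw [← lintegral_const_mul' _ _ (by finiteness)]
    congr 1
    ext v
    rw [hnorm v, hH]
    simp only [← hcv v]
    ring
  have step2 : (∫⁻ v, H (c • v + (w - c • w))) = ∫⁻ v, H (c • v) := by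
    have h := lintegral_add_right_eq_self (μ := (volume : Measure (Euc d)))
      (fun x => H (c • x)) (c⁻¹ • (w - c • w))
    calc (∫⁻ v, H (c • v + (w - c • w)))
        = ∫⁻ v, (fun x => H (c • x)) (v + c⁻¹ • (w - c • w)) := by
          congr 1
          ext v
          simp only [smul_add, smul_smul, mul_inv_cancel₀ hc0.ne', one_smul]
      _ = ∫⁻ v, H (c • v) := h
  have hfr : Module.finrank ℝ (Euc d) = d := finrank_euclideanSpace_fin
  have step3 : (∫⁻ v, H (c • v)) = ENNReal.ofReal ((c ^ d)⁻¹) * ∫⁻ u, H u := by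
    have hmap := MeasureTheory.Measure.map_addHaar_smul (volume : Measure (Euc d)) hc0.ne'
    calc (∫⁻ v, H (c • v)) = ∫⁻ u, H u ∂(Measure.map (c • ·) volume) :=
          (lintegral_map hHmeas (measurable_const_smul c)).symm
      _ = ENNReal.ofReal ((c ^ d)⁻¹) * ∫⁻ u, H u := by
          rw [hmap, hfr, lintegral_smul_measure]
          congr 2
          rw [abs_of_pos (by positivity)]
  rw [step1, step2, step3, ← mul_assoc, ← mul_assoc, ← ENNReal.ofReal_mul (by positivity),
    ← ENNReal.ofReal_mul (by positivity)]
  have hcoef : c ^ 2 * c⁻¹ * (c ^ d)⁻¹ ≤ 1 := by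
    rw [← div_eq_mul_inv, ← div_eq_mul_inv, div_div, div_le_one (by positivity)]
    calc c ^ 2 ≤ c ^ (d + 1) := pow_le_pow_right₀ hc1 (by omega)
      _ = c * c ^ d := by ring
  calc ENNReal.ofReal (c ^ 2 * c⁻¹ * (c ^ d)⁻¹) * ∫⁻ u, H u
      ≤ 1 * ∫⁻ u, H u := by
        gcongr
        exact (ENNReal.ofReal_le_one).2 hcoef
    _ = ∫⁻ u, H u := one_mul _

lemma gain_bound {d : ℕ} (hd : 1 ≤ d) {m n : ℕ} (h1 : 1 ≤ n) (h2 : n < m)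
    (p q : Euc d → ℝ) (hp : Measurable p) (hq : Measurable q)
    (hp0 : ∀ v, 0 ≤ p v) (hq0 : ∀ v, 0 ≤ q v) :
    ENNReal.ofReal (((m : ℝ) / n) ^ 2) *
        ∫⁻ v, ∫⁻ w, ENNReal.ofReal (p (cvar d m n v w) * q w * ‖v - w‖)
      ≤ ∫⁻ v, ∫⁻ w, ENNReal.ofReal (p v * q w * ‖v - w‖) := by
  have hcvm : Measurable (fun pr : Euc d × Euc d => cvar d m n pr.1 pr.2) := by
    unfold cvar
    exact ((measurable_fst.const_smul ((m:ℝ))).sub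
      (measurable_snd.const_smul ((m:ℝ) - (n:ℝ)))).const_smul (((n:ℝ))⁻¹)
  have hF : Measurable (Function.uncurry fun v w : Euc d =>
      ENNReal.ofReal (p (cvar d m n v w) * q w * ‖v - w‖)) := by
    apply Measurable.ennreal_ofReal
    exact ((hp.comp hcvm).mul (hq.comp measurable_snd)).mul
      (measurable_fst.sub measurable_snd).norm
  have hswap := lintegral_lintegral_swap (μ := (volume : Measure (Euc d)))
    (ν := (volume : Measure (Euc d))) hF.aemeasurable
  rw [hswap]
  have hinner : ∀ w, (∫⁻ v, ENNReal.ofReal (p (cvar d m n v w) * q w * ‖v - w‖))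
      = ENNReal.ofReal (q w) *
        ∫⁻ v, ENNReal.ofReal (p (cvar d m n v w)) * ENNReal.ofReal ‖v - w‖ := by
    intro w
    rw [← lintegral_const_mul' _ _ (by finiteness)]
    refine lintegral_congr fun v => ?_
    rw [ENNReal.ofReal_mul (mul_nonneg (hp0 _) (hq0 _)), ENNReal.ofReal_mul (hp0 _)]
    ring
  calc ENNReal.ofReal (((m : ℝ) / n) ^ 2) *
        ∫⁻ w, ∫⁻ v, ENNReal.ofReal (p (cvar d m n v w) * q w * ‖v - w‖)
      = ∫⁻ w, ENNReal.ofReal (q w) * (ENNReal.ofReal (((m : ℝ) / n) ^ 2)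
          * ∫⁻ v, ENNReal.ofReal (p (cvar d m n v w)) * ENNReal.ofReal ‖v - w‖) := by
        rw [← lintegral_const_mul' _ _ (by finiteness)]
        refine lintegral_congr fun w => ?_
        rw [hinner w]
        ring
    _ ≤ ∫⁻ w, ENNReal.ofReal (q w) *
          ∫⁻ u, ENNReal.ofReal (p u) * ENNReal.ofReal ‖u - w‖ := by
        refine lintegral_mono fun w => ?_
        exact mul_le_mul_right (lintegral_cvar hd h1 h2 _ hp.ennreal_ofReal w) _
    _ = ∫⁻ w, ∫⁻ u, ENNReal.ofReal (p u * q w * ‖u - w‖) := by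
        refine lintegral_congr fun w => ?_
        rw [← lintegral_const_mul' _ _ (by finiteness)]
        refine lintegral_congr fun u => ?_
        rw [ENNReal.ofReal_mul (mul_nonneg (hp0 _) (hq0 _)), ENNReal.ofReal_mul (hp0 _)]
        ring
    _ = ∫⁻ v, ∫⁻ w, ENNReal.ofReal (p v * q w * ‖v - w‖) := by
        have hG : Measurable (Function.uncurry fun w u : Euc d =>
            ENNReal.ofReal (p u * q w * ‖u - w‖)) := by
          apply Measurable.ennreal_ofReal
          exact ((hp.comp measurable_snd).mul (hq.comp measurable_fst)).mul
            (measurable_snd.sub measurable_fst).norm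
        rw [lintegral_lintegral_swap hG.aemeasurable]

lemma I_symm {d : ℕ} (a b : Euc d → ℝ) (ha : Measurable a) (hb : Measurable b) :
    (∫⁻ v, ∫⁻ w, ENNReal.ofReal (a v * b w * ‖v - w‖))
      = ∫⁻ v, ∫⁻ w, ENNReal.ofReal (b v * a w * ‖v - w‖) := by
  have hm : AEMeasurable (Function.uncurry fun v w : Euc d =>
      ENNReal.ofReal (a v * b w * ‖v - w‖))
      ((volume : Measure (Euc d)).prod volume) := by
    apply Measurable.aemeasurable
    apply Measurable.ennreal_ofReal
    exact ((ha.comp measurable_fst).mul (hb.comp measurable_snd)).mul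
      (measurable_fst.sub measurable_snd).norm
  rw [lintegral_lintegral_swap hm]
  refine lintegral_congr fun v => lintegral_congr fun w => ?_
  rw [norm_sub_rev]
  congr 1
  ring

lemma sum_reindex (M : ℕ) (I : ℕ → ℕ → ℝ≥0∞)
    (hsym : ∀ a ∈ Finset.Icc 1 M, ∀ b ∈ Finset.Icc 1 M, I a b = I b a) :
    (∑ m ∈ Finset.Icc 1 M, ∑ n ∈ Finset.Ico 1 m, (m : ℝ≥0∞) * I n (m - n))
      ≤ 2 * ∑ m ∈ Finset.Icc 1 M, ∑ n ∈ Finset.Icc 1 M, (m : ℝ≥0∞) * I m n := by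
  classical
  set A := (Finset.Icc 1 M).sigma (fun m => Finset.Ico 1 m) with hAdef
  set e : (Σ _ : ℕ, ℕ) → ℕ × ℕ := fun p => (p.2, p.1 - p.2) with hedef
  set F : ℕ × ℕ → ℝ≥0∞ := fun q => ((q.1 : ℝ≥0∞) + (q.2 : ℝ≥0∞)) * I q.1 q.2 with hFdef
  have hL : (∑ m ∈ Finset.Icc 1 M, ∑ n ∈ Finset.Ico 1 m, (m : ℝ≥0∞) * I n (m - n))
      = ∑ p ∈ A, F (e p) := by
    rw [hAdef, Finset.sum_sigma]
    refine Finset.sum_congr rfl fun m hm => Finset.sum_congr rfl fun n hn => ?_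
    rw [Finset.mem_Ico] at hn
    rw [hFdef, hedef]
    simp only
    congr 1
    have : (m : ℝ≥0∞) = ((n + (m - n) : ℕ) : ℝ≥0∞) := by
      congr 1
      omega
    rw [this]
    push_cast
    ring
  have hinj : ∀ p ∈ A, ∀ p' ∈ A, e p = e p' → p = p' := by
    intro p hp p' hp' hepp
    rw [hAdef, Finset.mem_sigma] at hp hp'
    rw [hedef] at hepp
    simp only [Prod.mk.injEq] at hepp
    have h1 : p.2 < p.1 := (Finset.mem_Ico.1 hp.2).2
    have h1' : p'.2 < p'.1 := (Finset.mem_Ico.1 hp'.2).2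
    have : p.1 = p'.1 := by omega
    exact Sigma.ext this (by simpa using hepp.1)
  have hsub : A.image e ⊆ (Finset.Icc 1 M) ×ˢ (Finset.Icc 1 M) := by
    intro q hq
    rw [Finset.mem_image] at hq
    obtain ⟨p, hp, rfl⟩ := hq
    rw [hAdef, Finset.mem_sigma, Finset.mem_Icc, Finset.mem_Ico] at hp
    rw [hedef]
    simp only [Finset.mem_product, Finset.mem_Icc]
    omega
  have hstep : (∑ p ∈ A, F (e p)) ≤ ∑ q ∈ (Finset.Icc 1 M) ×ˢ (Finset.Icc 1 M), F q := by
    rw [← Finset.sum_image hinj]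
    exact Finset.sum_le_sum_of_subset hsub
  have hR : (∑ q ∈ (Finset.Icc 1 M) ×ˢ (Finset.Icc 1 M), F q)
      = 2 * ∑ m ∈ Finset.Icc 1 M, ∑ n ∈ Finset.Icc 1 M, (m : ℝ≥0∞) * I m n := by
    rw [Finset.sum_product]
    have expand : ∀ m n : ℕ, F (m, n) = (m : ℝ≥0∞) * I m n + (n : ℝ≥0∞) * I m n := by
      intro m n
      rw [hFdef]
      simp only
      ring
    simp_rw [expand, Finset.sum_add_distrib]
    have hswap : (∑ m ∈ Finset.Icc 1 M, ∑ n ∈ Finset.Icc 1 M, (n : ℝ≥0∞) * I m n)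
        = ∑ m ∈ Finset.Icc 1 M, ∑ n ∈ Finset.Icc 1 M, (m : ℝ≥0∞) * I m n := by
      rw [Finset.sum_comm]
      refine Finset.sum_congr rfl fun n hn => Finset.sum_congr rfl fun m hm => ?_
      rw [hsym m hm n hn]
    rw [hswap, two_mul]
  calc (∑ m ∈ Finset.Icc 1 M, ∑ n ∈ Finset.Ico 1 m, (m : ℝ≥0∞) * I n (m - n))
      = ∑ p ∈ A, F (e p) := hL
    _ ≤ ∑ q ∈ (Finset.Icc 1 M) ×ˢ (Finset.Icc 1 M), F q := hstep
    _ = 2 * ∑ m ∈ Finset.Icc 1 M, ∑ n ∈ Finset.Icc 1 M, (m : ℝ≥0∞) * I m n := hR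


theorem main (d M : ℕ) (hd : 1 ≤ d) (hM : 1 ≤ M) (f : ℕ → Euc d → ℝ)
    (hmeas : ∀ n ∈ Finset.Icc 1 M, Measurable (f n))
    (hpos : ∀ n ∈ Finset.Icc 1 M, ∀ v, 0 ≤ f n v)
    (hmom : ∀ n ∈ Finset.Icc 1 M, (∫⁻ w, ENNReal.ofReal (f n w * jap w)) < ∞)
    (Qc : ℕ → Euc d → ℝ)
    (hQc : ∀ m, ∀ v, Qc m v =
      (∑ n ∈ Finset.Ico 1 m, ((m : ℝ) / (n : ℝ)) ^ 2 *
          ∫ w, f n (cvar d m n v w) * f (m - n) w * ‖v - w‖)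
      - 2 * ∑ n ∈ Finset.Icc 1 M, f m v * ∫ w, f n w * ‖v - w‖) :
    (∑ m ∈ Finset.Icc 1 M, ∑ n ∈ Finset.Ico 1 m, (m : ℝ≥0∞) *
        ∫⁻ w, ∫⁻ w', ENNReal.ofReal (f n w * f (m - n) w' * ‖w - w'‖))
      ≤ 2 * ∑ m ∈ Finset.Icc 1 M, ∑ n ∈ Finset.Icc 1 M, (m : ℝ≥0∞) *
        ∫⁻ v, ∫⁻ w, ENNReal.ofReal (f m v * f n w * ‖v - w‖) ∧
    (∑ m ∈ Finset.Icc 1 M, (m : ℝ) * ∫ v, Qc m v) ≤ 0 := by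
  classical
  set I : ℕ → ℕ → ℝ≥0∞ := fun a b =>
    ∫⁻ v, ∫⁻ w, ENNReal.ofReal (f a v * f b w * ‖v - w‖) with hIdef
  have hsym : ∀ a ∈ Finset.Icc 1 M, ∀ b ∈ Finset.Icc 1 M, I a b = I b a := by
    intro a ha b hb
    exact I_symm (f a) (f b) (hmeas a ha) (hmeas b hb)
  have part1 : (∑ m ∈ Finset.Icc 1 M, ∑ n ∈ Finset.Ico 1 m, (m : ℝ≥0∞) * I n (m - n))
      ≤ 2 * ∑ m ∈ Finset.Icc 1 M, ∑ n ∈ Finset.Icc 1 M, (m : ℝ≥0∞) * I m n :=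
    sum_reindex M I hsym
  refine ⟨part1, ?_⟩
  -- finiteness of I
  have hIfin : ∀ a ∈ Finset.Icc 1 M, ∀ b ∈ Finset.Icc 1 M, I a b < ∞ := by
    intro a ha b hb
    exact double_lt_top (f a) (f b) (hpos a ha) (hpos b hb) (hmom a ha) (hmom b hb)
  -- the loss kernel
  set K : ℕ → Euc d → ℝ≥0∞ := fun n v => ∫⁻ w, ENNReal.ofReal (f n w * ‖v - w‖) with hKdef
  have hKfin : ∀ n ∈ Finset.Icc 1 M, ∀ v, K n v < ∞ := by
    intro n hn v
    refine lt_of_le_of_lt (K_le (f n) (hpos n hn) v) ?_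
    exact ENNReal.mul_lt_top (by finiteness) (hmom n hn)
  have hKmeas : ∀ n ∈ Finset.Icc 1 M, Measurable (K n) := by
    intro n hn
    apply Measurable.lintegral_prod_right
    exact (((hmeas n hn).comp measurable_snd).mul
      ((measurable_fst.sub measurable_snd).norm)).ennreal_ofReal
  have hKval : ∀ n ∈ Finset.Icc 1 M, ∀ v,
      (∫ w, f n w * ‖v - w‖) = (K n v).toReal := by
    intro n hn v
    have hsm : AEStronglyMeasurable (fun w : Euc d => f n w * ‖v - w‖) volume :=
      ((hmeas n hn).mul ((measurable_const.sub measurable_id).norm)).aestronglyMeasurable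
    rw [integral_eq_lintegral_of_nonneg_ae
      (Filter.Eventually.of_forall fun w => mul_nonneg (hpos n hn w) (norm_nonneg _)) hsm]
  -- the gain kernel
  set J : ℕ → ℕ → Euc d → ℝ≥0∞ := fun m n v =>
    ∫⁻ w, ENNReal.ofReal (f n (cvar d m n v w) * f (m - n) w * ‖v - w‖) with hJdef
  have hmem1 : ∀ m ∈ Finset.Icc 1 M, ∀ n ∈ Finset.Ico 1 m, n ∈ Finset.Icc 1 M := by
    intro m hm n hn
    rw [Finset.mem_Icc] at hm ⊢
    rw [Finset.mem_Ico] at hn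
    omega
  have hmem2 : ∀ m ∈ Finset.Icc 1 M, ∀ n ∈ Finset.Ico 1 m, m - n ∈ Finset.Icc 1 M := by
    intro m hm n hn
    rw [Finset.mem_Icc] at hm ⊢
    rw [Finset.mem_Ico] at hn
    omega
  have hcvm : ∀ m n : ℕ, Measurable (fun pr : Euc d × Euc d => cvar d m n pr.1 pr.2) := by
    intro m n
    unfold cvar
    exact ((measurable_fst.const_smul ((m:ℝ))).sub
      (measurable_snd.const_smul ((m:ℝ) - (n:ℝ)))).const_smul (((n:ℝ))⁻¹)
  have hJmeas : ∀ m ∈ Finset.Icc 1 M, ∀ n ∈ Finset.Ico 1 m, Measurable (J m n) := by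
    intro m hm n hn
    apply Measurable.lintegral_prod_right
    exact ((((hmeas n (hmem1 m hm n hn)).comp (hcvm m n)).mul
      ((hmeas _ (hmem2 m hm n hn)).comp measurable_snd)).mul
      (measurable_fst.sub measurable_snd).norm).ennreal_ofReal
  have hJval : ∀ m ∈ Finset.Icc 1 M, ∀ n ∈ Finset.Ico 1 m, ∀ v,
      (∫ w, f n (cvar d m n v w) * f (m - n) w * ‖v - w‖) = (J m n v).toReal := by
    intro m hm n hn v
    have hcvw : Measurable (fun w : Euc d => cvar d m n v w) := by
      unfold cvar
      exact (measurable_const.sub (measurable_id.const_smul ((m:ℝ) - (n:ℝ)))).const_smul ((n:ℝ)⁻¹)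
    have hsm : AEStronglyMeasurable
        (fun w : Euc d => f n (cvar d m n v w) * f (m - n) w * ‖v - w‖) volume :=
      ((((hmeas n (hmem1 m hm n hn)).comp hcvw).mul
        (hmeas _ (hmem2 m hm n hn))).mul
        ((measurable_const.sub measurable_id).norm)).aestronglyMeasurable
    rw [integral_eq_lintegral_of_nonneg_ae
      (Filter.Eventually.of_forall fun w => mul_nonneg
        (mul_nonneg (hpos n (hmem1 m hm n hn) _) (hpos _ (hmem2 m hm n hn) w)) (norm_nonneg _))
      hsm]
  -- rewrite Q
  set G : ℕ → Euc d → ℝ := fun m v =>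
    ∑ n ∈ Finset.Ico 1 m, ((m : ℝ) / (n : ℝ)) ^ 2 * (J m n v).toReal with hGdef
  set L : ℕ → Euc d → ℝ := fun m v =>
    2 * ∑ n ∈ Finset.Icc 1 M, f m v * (K n v).toReal with hLdef
  have hQ : ∀ m ∈ Finset.Icc 1 M, ∀ v, Qc m v = G m v - L m v := by
    intro m hm v
    rw [hQc m v, hGdef, hLdef]
    simp only
    congr 1
    · exact Finset.sum_congr rfl fun n hn => by rw [hJval m hm n hn v]
    · congr 1
      exact Finset.sum_congr rfl fun n hn => by rw [hKval n hn v]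
  -- gain side estimates
  have hG0 : ∀ m, ∀ v, 0 ≤ G m v := by
    intro m v
    rw [hGdef]
    exact Finset.sum_nonneg fun n hn =>
      mul_nonneg (sq_nonneg _) ENNReal.toReal_nonneg
  have hGmeas : ∀ m ∈ Finset.Icc 1 M, Measurable (G m) := by
    intro m hm
    rw [hGdef]
    apply Finset.measurable_sum
    intro n hn
    exact ((hJmeas m hm n hn).ennreal_toReal).const_mul _
  have hGbound : ∀ m ∈ Finset.Icc 1 M,
      (∫⁻ v, ENNReal.ofReal (G m v)) ≤ ∑ n ∈ Finset.Ico 1 m, I n (m - n) := by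
    intro m hm
    have hpt : ∀ v, ENNReal.ofReal (G m v)
        ≤ ∑ n ∈ Finset.Ico 1 m,
          ENNReal.ofReal (((m : ℝ) / (n : ℝ)) ^ 2) * J m n v := by
      intro v
      rw [hGdef]
      simp only
      rw [ENNReal.ofReal_sum_of_nonneg
        (fun n hn => mul_nonneg (sq_nonneg _) ENNReal.toReal_nonneg)]
      refine Finset.sum_le_sum fun n hn => ?_
      rw [ENNReal.ofReal_mul (sq_nonneg _)]
      exact mul_le_mul_right ENNReal.ofReal_toReal_le _
    calc (∫⁻ v, ENNReal.ofReal (G m v))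
        ≤ ∫⁻ v, ∑ n ∈ Finset.Ico 1 m,
            ENNReal.ofReal (((m : ℝ) / (n : ℝ)) ^ 2) * J m n v := lintegral_mono hpt
      _ = ∑ n ∈ Finset.Ico 1 m,
            ENNReal.ofReal (((m : ℝ) / (n : ℝ)) ^ 2) * ∫⁻ v, J m n v := by
          rw [lintegral_finset_sum]
          · refine Finset.sum_congr rfl fun n hn => ?_
            rw [lintegral_const_mul' _ _ (by finiteness)]
          · intro n hn
            exact (hJmeas m hm n hn).const_mul _
      _ ≤ ∑ n ∈ Finset.Ico 1 m, I n (m - n) := by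
          refine Finset.sum_le_sum fun n hn => ?_
          rw [Finset.mem_Ico] at hn
          exact gain_bound hd hn.1 hn.2 (f n) (f (m - n))
            (hmeas n (hmem1 m hm n (Finset.mem_Ico.2 hn)))
            (hmeas _ (hmem2 m hm n (Finset.mem_Ico.2 hn)))
            (hpos n (hmem1 m hm n (Finset.mem_Ico.2 hn)))
            (hpos _ (hmem2 m hm n (Finset.mem_Ico.2 hn)))
  have hGfin : ∀ m ∈ Finset.Icc 1 M, (∫⁻ v, ENNReal.ofReal (G m v)) < ∞ := by
    intro m hm
    refine lt_of_le_of_lt (hGbound m hm) ?_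
    refine ENNReal.sum_lt_top.2 fun n hn => ?_
    exact hIfin n (hmem1 m hm n hn) (m - n) (hmem2 m hm n hn)
  have hGint : ∀ m ∈ Finset.Icc 1 M, Integrable (G m) := by
    intro m hm
    refine ⟨(hGmeas m hm).aestronglyMeasurable, ?_⟩
    rw [hasFiniteIntegral_iff_ofReal (Filter.Eventually.of_forall (hG0 m))]
    exact hGfin m hm
  have hGval : ∀ m ∈ Finset.Icc 1 M,
      (∫ v, G m v) = (∫⁻ v, ENNReal.ofReal (G m v)).toReal := by
    intro m hm
    rw [integral_eq_lintegral_of_nonneg_ae (Filter.Eventually.of_forall (hG0 m))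
      (hGmeas m hm).aestronglyMeasurable]
  -- loss side
  have hL0 : ∀ m ∈ Finset.Icc 1 M, ∀ v, 0 ≤ L m v := by
    intro m hm v
    rw [hLdef]
    simp only
    have : 0 ≤ ∑ n ∈ Finset.Icc 1 M, f m v * (K n v).toReal :=
      Finset.sum_nonneg fun n hn => mul_nonneg (hpos m hm v) ENNReal.toReal_nonneg
    linarith
  have hLmeas : ∀ m ∈ Finset.Icc 1 M, Measurable (L m) := by
    intro m hm
    rw [hLdef]
    apply Measurable.const_mul
    apply Finset.measurable_sum
    intro n hn
    exact (hmeas m hm).mul (hKmeas n hn).ennreal_toReal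
  have hLeq : ∀ m ∈ Finset.Icc 1 M,
      (∫⁻ v, ENNReal.ofReal (L m v)) = 2 * ∑ n ∈ Finset.Icc 1 M, I m n := by
    intro m hm
    have hpt : ∀ v, ENNReal.ofReal (L m v)
        = 2 * ∑ n ∈ Finset.Icc 1 M, ENNReal.ofReal (f m v) * K n v := by
      intro v
      rw [hLdef]
      simp only
      rw [ENNReal.ofReal_mul (by norm_num)]
      congr 1
      · norm_num
      rw [ENNReal.ofReal_sum_of_nonneg
        (fun n hn => mul_nonneg (hpos m hm v) ENNReal.toReal_nonneg)]
      refine Finset.sum_congr rfl fun n hn => ?_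
      rw [ENNReal.ofReal_mul (hpos m hm v), ENNReal.ofReal_toReal (hKfin n hn v).ne]
    simp_rw [hpt]
    rw [lintegral_const_mul' _ _ (by norm_num)]
    congr 1
    rw [lintegral_finset_sum (f := fun n v => ENNReal.ofReal (f m v) * K n v) _ (fun n hn => ((hmeas m hm).ennreal_ofReal.mul (hKmeas n hn)))]
    refine Finset.sum_congr rfl fun n hn => ?_
    rw [hIdef]
    simp only
    refine lintegral_congr fun v => ?_
    rw [hKdef]
    simp only
    rw [← lintegral_const_mul' _ _ (by finiteness)]
    refine lintegral_congr fun w => ?_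
    rw [← ENNReal.ofReal_mul (hpos m hm v), ← mul_assoc]
  have hLfin : ∀ m ∈ Finset.Icc 1 M, (∫⁻ v, ENNReal.ofReal (L m v)) < ∞ := by
    intro m hm
    rw [hLeq m hm]
    refine ENNReal.mul_lt_top (by norm_num) ?_
    exact ENNReal.sum_lt_top.2 fun n hn => hIfin m hm n hn
  have hLint : ∀ m ∈ Finset.Icc 1 M, Integrable (L m) := by
    intro m hm
    refine ⟨(hLmeas m hm).aestronglyMeasurable, ?_⟩
    rw [hasFiniteIntegral_iff_ofReal (Filter.Eventually.of_forall (hL0 m hm))]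
    exact hLfin m hm
  have hLval : ∀ m ∈ Finset.Icc 1 M,
      (∫ v, L m v) = (∫⁻ v, ENNReal.ofReal (L m v)).toReal := by
    intro m hm
    rw [integral_eq_lintegral_of_nonneg_ae (Filter.Eventually.of_forall (hL0 m hm))
      (hLmeas m hm).aestronglyMeasurable]
  -- put it together
  have hQint : ∀ m ∈ Finset.Icc 1 M,
      (∫ v, Qc m v) = (∫⁻ v, ENNReal.ofReal (G m v)).toReal
        - (∫⁻ v, ENNReal.ofReal (L m v)).toReal := by
    intro m hm
    have : (∫ v, Qc m v) = ∫ v, (G m v - L m v) := by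
      refine integral_congr_ae (Filter.Eventually.of_forall fun v => hQ m hm v)
    rw [this, integral_sub (hGint m hm) (hLint m hm), hGval m hm, hLval m hm]
  have cast_sum : ∀ (Z : ℕ → ℝ≥0∞), (∀ m ∈ Finset.Icc 1 M, Z m ≠ ∞) →
      (∑ m ∈ Finset.Icc 1 M, (m : ℝ) * (Z m).toReal)
        = (∑ m ∈ Finset.Icc 1 M, (m : ℝ≥0∞) * Z m).toReal := by
    intro Z hZ
    rw [ENNReal.toReal_sum
      (fun m hm => ENNReal.mul_ne_top (ENNReal.natCast_ne_top m) (hZ m hm))]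
    refine Finset.sum_congr rfl fun m hm => ?_
    rw [ENNReal.toReal_mul]
    simp
  -- final chain
  have hXY : (∑ m ∈ Finset.Icc 1 M, (m : ℝ≥0∞) * ∫⁻ v, ENNReal.ofReal (G m v))
      ≤ ∑ m ∈ Finset.Icc 1 M, (m : ℝ≥0∞) * ∫⁻ v, ENNReal.ofReal (L m v) := by
    calc (∑ m ∈ Finset.Icc 1 M, (m : ℝ≥0∞) * ∫⁻ v, ENNReal.ofReal (G m v))
        ≤ ∑ m ∈ Finset.Icc 1 M, (m : ℝ≥0∞) * ∑ n ∈ Finset.Ico 1 m, I n (m - n) := by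
          refine Finset.sum_le_sum fun m hm => mul_le_mul_right (hGbound m hm) _
      _ = ∑ m ∈ Finset.Icc 1 M, ∑ n ∈ Finset.Ico 1 m, (m : ℝ≥0∞) * I n (m - n) := by
          refine Finset.sum_congr rfl fun m hm => ?_
          rw [Finset.mul_sum]
      _ ≤ 2 * ∑ m ∈ Finset.Icc 1 M, ∑ n ∈ Finset.Icc 1 M, (m : ℝ≥0∞) * I m n := part1
      _ = ∑ m ∈ Finset.Icc 1 M, (m : ℝ≥0∞) * (2 * ∑ n ∈ Finset.Icc 1 M, I m n) := by
          rw [Finset.mul_sum]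
          refine Finset.sum_congr rfl fun m hm => ?_
          rw [← Finset.mul_sum, mul_left_comm]
      _ = ∑ m ∈ Finset.Icc 1 M, (m : ℝ≥0∞) * ∫⁻ v, ENNReal.ofReal (L m v) := by
          refine Finset.sum_congr rfl fun m hm => ?_
          rw [hLeq m hm]
  have hYfin : (∑ m ∈ Finset.Icc 1 M, (m : ℝ≥0∞) * ∫⁻ v, ENNReal.ofReal (L m v)) ≠ ∞ := by
    refine (ENNReal.sum_lt_top.2 fun m hm => ?_).ne
    exact ENNReal.mul_lt_top (ENNReal.natCast_lt_top m) (hLfin m hm)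
  have final : (∑ m ∈ Finset.Icc 1 M, (m : ℝ) * ∫ v, Qc m v)
      = (∑ m ∈ Finset.Icc 1 M, (m : ℝ≥0∞) * ∫⁻ v, ENNReal.ofReal (G m v)).toReal
        - (∑ m ∈ Finset.Icc 1 M, (m : ℝ≥0∞) * ∫⁻ v, ENNReal.ofReal (L m v)).toReal := by
    rw [← cast_sum _ (fun m hm => (hGfin m hm).ne), ← cast_sum _ (fun m hm => (hLfin m hm).ne),
      ← Finset.sum_sub_distrib]
    refine Finset.sum_congr rfl fun m hm => ?_
    rw [hQint m hm]
    ring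
  rw [final]
  have := ENNReal.toReal_mono hYfin hXY
  linarith

end Coag

/-- the gain term of ∑_m m ∫ Q_m(f,f) is dominated by the loss term;
equivalently ∑_m m ∫ Q_m(f,f) ≤ 0. -/
theorem statement1 (d M : ℕ) (hd : 1 ≤ d) (hM : 1 ≤ M) (f : ℕ → Euc d → ℝ)
    (hmeas : ∀ n ∈ Finset.Icc 1 M, Measurable (f n))
    (hpos : ∀ n ∈ Finset.Icc 1 M, ∀ v, 0 ≤ f n v)
    (hmom : ∀ n ∈ Finset.Icc 1 M, (∫⁻ w, ENNReal.ofReal (f n w * jap w)) < ∞) :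
    (∑ m ∈ Finset.Icc 1 M, ∑ n ∈ Finset.Ico 1 m, (m : ℝ≥0∞) *
        ∫⁻ w, ∫⁻ w', ENNReal.ofReal (f n w * f (m - n) w' * ‖w - w'‖))
      ≤ 2 * ∑ m ∈ Finset.Icc 1 M, ∑ n ∈ Finset.Icc 1 M, (m : ℝ≥0∞) *
        ∫⁻ v, ∫⁻ w, ENNReal.ofReal (f m v * f n w * ‖v - w‖) ∧
    (∑ m ∈ Finset.Icc 1 M, (m : ℝ) * ∫ v, Qcoag d M f f m v) ≤ 0 :=
  Coag.main d M hd hM f hmeas hpos hmom (Qcoag d M f f) (fun m v => rfl)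
end
end

section
/- Let d ≥ 1, M ≥ 1 be integers and let f = (f_1,…,f_M) and g = (g_1,…,g_M) be families of Schwartz functions on ℝ^d. Then for each m = 1,…,M the function Q_m(f,g) is differentiable on ℝ^d and, for every i ∈ {1,…,d} and every v ∈ ℝ^d, ∂_{v_i} Q_m(f,g)(v) = Q_m(∂_i f, g)(v) + Q_m(f, ∂_i g)(v), where ∂_i f denotes the family (∂_{v_i} f_1, …, ∂_{v_i} f_M) and likewise for ∂_i g. -/
open MeasureTheory Real Filter
open scoped ENNReal NNReal

noncomputable section

section helpers

variable {d : ℕ}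


/-- Decay bound for a Schwartz function and its fderiv. -/
lemma schwartz_master (ψ : SchwartzMap (Euc d) ℝ) (k : ℕ) :
    ∃ B : ℝ, 0 ≤ B ∧ ∀ y : Euc d,
      ‖ψ y‖ ≤ B * ((1 + ‖y‖) ^ k)⁻¹ ∧ ‖fderiv ℝ ψ y‖ ≤ B * ((1 + ‖y‖) ^ k)⁻¹ := by
  set m : ℕ × ℕ := (k, 1)
  set B : ℝ := 2 ^ k * (Finset.Iic m).sup (fun m => SchwartzMap.seminorm ℝ m.1 m.2) ψ with hB
  have hB0 : 0 ≤ B := by positivity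
  refine ⟨B, hB0, fun y => ?_⟩
  have hpos : (0:ℝ) < (1 + ‖y‖) ^ k := by positivity
  have h0 : (1 + ‖y‖) ^ k * ‖iteratedFDeriv ℝ 0 (⇑ψ) y‖ ≤ B :=
    SchwartzMap.one_add_le_sup_seminorm_apply (𝕜 := ℝ) (m := m) le_rfl (Nat.zero_le 1) ψ y
  have h1 : (1 + ‖y‖) ^ k * ‖iteratedFDeriv ℝ 1 (⇑ψ) y‖ ≤ B :=
    SchwartzMap.one_add_le_sup_seminorm_apply (𝕜 := ℝ) (m := m) le_rfl le_rfl ψ y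
  rw [norm_iteratedFDeriv_zero] at h0
  have hfd : ‖fderiv ℝ (⇑ψ) y‖ = ‖iteratedFDeriv ℝ 1 (⇑ψ) y‖ := by
    rw [← norm_iteratedFDeriv_fderiv, norm_iteratedFDeriv_zero]
  constructor
  · rw [mul_comm, ← le_div_iff₀ hpos] at h0
    simpa [div_eq_mul_inv, mul_comm] using h0
  · rw [mul_comm, ← le_div_iff₀ hpos] at h1
    rw [hfd]
    simpa [div_eq_mul_inv, mul_comm] using h1

lemma one_add_pow_inv_le_one {y : Euc d} {k : ℕ} : ((1 + ‖y‖) ^ k)⁻¹ ≤ 1 := by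
  rw [inv_le_one_iff₀]
  right
  exact one_le_pow₀ (by simp [norm_nonneg])

/-- The core inequality for the dominated-derivative bound. -/
lemma core_ineq (v x u : Euc d) (hx : ‖x - v‖ ≤ 1) :
    ‖u‖ * ((1 + ‖x - u‖) ^ (d + 2))⁻¹ ≤ (2 + ‖v‖) ^ (d + 2) * ((1 + ‖u‖) ^ (d + 1))⁻¹ := by
  have hu : (0:ℝ) < 1 + ‖u‖ := by positivity
  have hxu : (0:ℝ) < 1 + ‖x - u‖ := by positivity
  have hv : (0:ℝ) < 2 + ‖v‖ := by positivity
  have h1 : 1 + ‖u‖ ≤ (2 + ‖v‖) * (1 + ‖x - u‖) := by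
    have t1 : ‖u‖ ≤ ‖x - u‖ + ‖x‖ := by
      calc ‖u‖ = ‖x - (x - u)‖ := by rw [sub_sub_cancel]
      _ ≤ ‖x‖ + ‖x - u‖ := norm_sub_le _ _
      _ = ‖x - u‖ + ‖x‖ := by ring
    have t2 : ‖x‖ ≤ ‖x - v‖ + ‖v‖ := by
      calc ‖x‖ = ‖(x - v) + v‖ := by rw [sub_add_cancel]
      _ ≤ ‖x - v‖ + ‖v‖ := norm_add_le _ _
    nlinarith [norm_nonneg (x - u), norm_nonneg v]
  rw [mul_inv_le_iff₀ (by positivity), mul_assoc]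
  calc ‖u‖ ≤ 1 + ‖u‖ := by linarith
  _ = (1 + ‖u‖) ^ (d + 2) * ((1 + ‖u‖) ^ (d + 1))⁻¹ := by
      rw [pow_succ' (1 + ‖u‖) (d+1)]
      field_simp
  _ ≤ ((2 + ‖v‖) * (1 + ‖x - u‖)) ^ (d + 2) * ((1 + ‖u‖) ^ (d + 1))⁻¹ := by
      have h2 : (1 + ‖u‖)^(d+2) ≤ ((2 + ‖v‖) * (1 + ‖x - u‖)) ^ (d + 2) :=
        pow_le_pow_left₀ (by positivity) h1 _
      exact mul_le_mul_of_nonneg_right h2 (by positivity)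
  _ = (2 + ‖v‖) ^ (d + 2) * (((1 + ‖u‖) ^ (d + 1))⁻¹ * (1 + ‖x - u‖) ^ (d + 2)) := by
      rw [mul_pow]; ring

lemma integrable_bound (C : ℝ) :
    Integrable (fun u : Euc d => C * ((1 + ‖u‖) ^ (d + 1))⁻¹) := by
  have h : Integrable (fun u : Euc d => (1 + ‖u‖) ^ (-((d:ℝ) + 1))) :=
    integrable_one_add_norm (by simp [finrank_euclideanSpace])
  have := h.const_mul C
  refine this.congr (Eventually.of_forall fun u => ?_)
  simp only
  congr 1
  rw [Real.rpow_neg (by positivity), ← Real.rpow_natCast (1 + ‖u‖) (d+1)]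
  push_cast
  ring_nf

/-- Pointwise bound on the integrand. -/
lemma prod_bound {φ ψ : Euc d → ℝ} {A B : ℝ} (hA0 : 0 ≤ A) (hB0 : 0 ≤ B)
    (hA : ∀ y, ‖φ y‖ ≤ A) (hB : ∀ y, ‖ψ y‖ ≤ B * ((1 + ‖y‖) ^ (d + 2))⁻¹)
    (v : Euc d) {x : Euc d} (hx : ‖x - v‖ ≤ 1) (c : ℝ) (u : Euc d) :
    ‖φ (x + c • u) * ψ (x - u) * ‖u‖‖ ≤
      A * B * (2 + ‖v‖) ^ (d + 2) * ((1 + ‖u‖) ^ (d + 1))⁻¹ := by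
  rw [norm_mul, norm_mul, norm_norm]
  calc ‖φ (x + c • u)‖ * ‖ψ (x - u)‖ * ‖u‖
      ≤ A * (B * ((1 + ‖x - u‖) ^ (d + 2))⁻¹) * ‖u‖ := by
        apply mul_le_mul_of_nonneg_right _ (norm_nonneg u)
        exact mul_le_mul (hA _) (hB _) (norm_nonneg _) hA0
  _ = A * B * (‖u‖ * ((1 + ‖x - u‖) ^ (d + 2))⁻¹) := by ring
  _ ≤ A * B * ((2 + ‖v‖) ^ (d + 2) * ((1 + ‖u‖) ^ (d + 1))⁻¹) :=
        mul_le_mul_of_nonneg_left (core_ineq v x u hx) (by positivity)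
  _ = A * B * (2 + ‖v‖) ^ (d + 2) * ((1 + ‖u‖) ^ (d + 1))⁻¹ := by ring

/-- Integrability of the integrand. -/
lemma int_aux {φ ψ : Euc d → ℝ} (hφc : Continuous φ) (hψc : Continuous ψ)
    {A B : ℝ} (hA0 : 0 ≤ A) (hB0 : 0 ≤ B)
    (hA : ∀ y, ‖φ y‖ ≤ A) (hB : ∀ y, ‖ψ y‖ ≤ B * ((1 + ‖y‖) ^ (d + 2))⁻¹)
    (c : ℝ) (v : Euc d) :
    Integrable (fun u : Euc d => φ (v + c • u) * ψ (v - u) * ‖u‖) := by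
  refine (integrable_bound (A * B * (2 + ‖v‖) ^ (d + 2))).mono' ?_
    (Eventually.of_forall fun u => ?_)
  · exact (((hφc.comp (continuous_const.add (continuous_const_smul c))).mul
      (hψc.comp (continuous_const.sub continuous_id))).mul
      continuous_norm).aestronglyMeasurable
  · exact prod_bound hA0 hB0 hA hB v (by simp) c u

section key

variable {φ ψ : Euc d → ℝ} {A B : ℝ}

/-- Bound on the norm of the `x`-derivative of the integrand. -/
lemma F'_bound (hA0 : 0 ≤ A) (hB0 : 0 ≤ B)
    (hA : ∀ y, ‖φ y‖ ≤ A ∧ ‖fderiv ℝ φ y‖ ≤ A)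
    (hB : ∀ y, ‖ψ y‖ ≤ B * ((1 + ‖y‖) ^ (d + 2))⁻¹ ∧
      ‖fderiv ℝ ψ y‖ ≤ B * ((1 + ‖y‖) ^ (d + 2))⁻¹)
    (c : ℝ) (v : Euc d) {x : Euc d} (hx : ‖x - v‖ ≤ 1) (u : Euc d) :
    ‖(ψ (x - u) * ‖u‖) • fderiv ℝ φ (x + c • u)
      + (φ (x + c • u) * ‖u‖) • fderiv ℝ ψ (x - u)‖ ≤
      2 * (A * B * (2 + ‖v‖) ^ (d + 2)) * ((1 + ‖u‖) ^ (d + 1))⁻¹ := by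
  have key : ∀ (a b : ℝ), ‖a‖ ≤ B * ((1 + ‖x - u‖) ^ (d + 2))⁻¹ → ‖b‖ ≤ A →
      ‖a * ‖u‖ * b‖ ≤ A * B * (2 + ‖v‖) ^ (d + 2) * ((1 + ‖u‖) ^ (d + 1))⁻¹ := by
    intro a b ha hb
    rw [norm_mul, norm_mul, norm_norm]
    calc ‖a‖ * ‖u‖ * ‖b‖ ≤ (B * ((1 + ‖x - u‖) ^ (d + 2))⁻¹) * ‖u‖ * A := by
          apply mul_le_mul _ hb (norm_nonneg _) (by positivity)
          exact mul_le_mul_of_nonneg_right ha (norm_nonneg _)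
    _ = A * B * (‖u‖ * ((1 + ‖x - u‖) ^ (d + 2))⁻¹) := by ring
    _ ≤ A * B * ((2 + ‖v‖) ^ (d + 2) * ((1 + ‖u‖) ^ (d + 1))⁻¹) :=
          mul_le_mul_of_nonneg_left (core_ineq v x u hx) (by positivity)
    _ = A * B * (2 + ‖v‖) ^ (d + 2) * ((1 + ‖u‖) ^ (d + 1))⁻¹ := by ring
  calc ‖(ψ (x - u) * ‖u‖) • fderiv ℝ φ (x + c • u)
      + (φ (x + c • u) * ‖u‖) • fderiv ℝ ψ (x - u)‖
      ≤ ‖(ψ (x - u) * ‖u‖) • fderiv ℝ φ (x + c • u)‖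
        + ‖(φ (x + c • u) * ‖u‖) • fderiv ℝ ψ (x - u)‖ := norm_add_le _ _
  _ ≤ A * B * (2 + ‖v‖) ^ (d + 2) * ((1 + ‖u‖) ^ (d + 1))⁻¹
      + A * B * (2 + ‖v‖) ^ (d + 2) * ((1 + ‖u‖) ^ (d + 1))⁻¹ := by
      apply add_le_add
      · rw [norm_smul]
        have := key (ψ (x - u)) (‖fderiv ℝ φ (x + c • u)‖) (hB _).1
          (by rw [norm_norm]; exact (hA _).2)
        rw [norm_mul, norm_mul, norm_norm, norm_norm] at this
        rw [norm_mul, norm_norm]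
        linarith
      · rw [norm_smul]
        have := key (‖fderiv ℝ ψ (x - u)‖) (φ (x + c • u))
          (by rw [norm_norm]; exact (hB _).2) (hA _).1
        rw [norm_mul, norm_mul, norm_norm, norm_norm] at this
        rw [norm_mul, norm_norm]
        linarith
  _ = 2 * (A * B * (2 + ‖v‖) ^ (d + 2)) * ((1 + ‖u‖) ^ (d + 1))⁻¹ := by ring

lemma F'_int (hφ : ContDiff ℝ 1 φ) (hψ : ContDiff ℝ 1 ψ) (hA0 : 0 ≤ A) (hB0 : 0 ≤ B)
    (hA : ∀ y, ‖φ y‖ ≤ A ∧ ‖fderiv ℝ φ y‖ ≤ A)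
    (hB : ∀ y, ‖ψ y‖ ≤ B * ((1 + ‖y‖) ^ (d + 2))⁻¹ ∧
      ‖fderiv ℝ ψ y‖ ≤ B * ((1 + ‖y‖) ^ (d + 2))⁻¹)
    (c : ℝ) (v : Euc d) :
    Integrable (fun u : Euc d => (ψ (v - u) * ‖u‖) • fderiv ℝ φ (v + c • u)
      + (φ (v + c • u) * ‖u‖) • fderiv ℝ ψ (v - u)) := by
  refine (integrable_bound (2 * (A * B * (2 + ‖v‖) ^ (d + 2)))).mono' ?_
    (Eventually.of_forall fun u => ?_)
  · have c1 : Continuous fun u : Euc d => v + c • u :=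
      continuous_const.add (continuous_const_smul c)
    have c2 : Continuous fun u : Euc d => v - u := continuous_const.sub continuous_id
    exact ((((hψ.continuous.comp c2).mul continuous_norm).smul
        ((hφ.continuous_fderiv one_ne_zero).comp c1)).add
      (((hφ.continuous.comp c1).mul continuous_norm).smul
        ((hψ.continuous_fderiv one_ne_zero).comp c2))).aestronglyMeasurable
  · exact F'_bound hA0 hB0 hA hB c v (by simp) u

/-- Differentiation under the integral sign. -/
lemma key (hφ : ContDiff ℝ 1 φ) (hψ : ContDiff ℝ 1 ψ) (hA0 : 0 ≤ A) (hB0 : 0 ≤ B)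
    (hA : ∀ y, ‖φ y‖ ≤ A ∧ ‖fderiv ℝ φ y‖ ≤ A)
    (hB : ∀ y, ‖ψ y‖ ≤ B * ((1 + ‖y‖) ^ (d + 2))⁻¹ ∧
      ‖fderiv ℝ ψ y‖ ≤ B * ((1 + ‖y‖) ^ (d + 2))⁻¹)
    (c : ℝ) (v : Euc d) :
    HasFDerivAt (fun x => ∫ u : Euc d, φ (x + c • u) * ψ (x - u) * ‖u‖)
      (∫ u : Euc d, ((ψ (v - u) * ‖u‖) • fderiv ℝ φ (v + c • u)
        + (φ (v + c • u) * ‖u‖) • fderiv ℝ ψ (v - u))) v := by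
  have c1 : Continuous fun u : Euc d => v + c • u :=
    continuous_const.add (continuous_const_smul c)
  have hdiff : ∀ (u : Euc d), ∀ x ∈ Metric.ball v 1,
      HasFDerivAt (fun x => φ (x + c • u) * ψ (x - u) * ‖u‖)
        ((ψ (x - u) * ‖u‖) • fderiv ℝ φ (x + c • u)
          + (φ (x + c • u) * ‖u‖) • fderiv ℝ ψ (x - u)) x := by
    intro u x _
    have hd1 : HasFDerivAt (fun x : Euc d => φ (x + c • u)) (fderiv ℝ φ (x + c • u)) x := by
      have h := (hφ.differentiable one_ne_zero (x + c • u)).hasFDerivAt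
      have h2 := h.comp x ((hasFDerivAt_id x).add_const (c • u))
      exact h2
    have hd2 : HasFDerivAt (fun x : Euc d => ψ (x - u)) (fderiv ℝ ψ (x - u)) x := by
      have h := (hψ.differentiable one_ne_zero (x - u)).hasFDerivAt
      have h2 := h.comp x ((hasFDerivAt_id x).sub_const u)
      exact h2
    have := (hd1.mul hd2).mul_const ‖u‖
    refine this.congr_fderiv ?_
    ext e
    simp
    ring
  refine hasFDerivAt_integral_of_dominated_of_fderiv_le (𝕜 := ℝ) (μ := volume)
    (F := fun x u => φ (x + c • u) * ψ (x - u) * ‖u‖)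
    (F' := fun x u => (ψ (x - u) * ‖u‖) • fderiv ℝ φ (x + c • u)
      + (φ (x + c • u) * ‖u‖) • fderiv ℝ ψ (x - u))
    (bound := fun u => 2 * (A * B * (2 + ‖v‖) ^ (d + 2)) * ((1 + ‖u‖) ^ (d + 1))⁻¹)
    (Metric.ball_mem_nhds v one_pos) ?_ ?_ ?_ ?_ ?_ ?_
  · refine Eventually.of_forall fun x => ?_
    exact (((hφ.continuous.comp (continuous_const.add (continuous_const_smul c))).mul
      (hψ.continuous.comp (continuous_const.sub continuous_id))).mul
      continuous_norm).aestronglyMeasurable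
  · exact int_aux hφ.continuous hψ.continuous hA0 hB0 (fun y => (hA y).1)
      (fun y => (hB y).1) c v
  · exact (F'_int hφ hψ hA0 hB0 hA hB c v).aestronglyMeasurable
  · exact Eventually.of_forall fun u => fun x hx =>
      F'_bound hA0 hB0 hA hB c v (le_of_lt (by simpa [dist_eq_norm] using hx)) u
  · exact integrable_bound _
  · exact Eventually.of_forall fun u => hdiff u

end key

lemma schwartz_pack (ψ : SchwartzMap (Euc d) ℝ) :
    ∃ B : ℝ, 0 ≤ B ∧ (∀ y, ‖ψ y‖ ≤ B ∧ ‖fderiv ℝ ψ y‖ ≤ B) ∧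
      (∀ y, ‖ψ y‖ ≤ B * ((1 + ‖y‖) ^ (d + 2))⁻¹ ∧
        ‖fderiv ℝ ψ y‖ ≤ B * ((1 + ‖y‖) ^ (d + 2))⁻¹) := by
  obtain ⟨B, hB0, hB⟩ := schwartz_master ψ (d + 2)
  refine ⟨B, hB0, fun y => ?_, hB⟩
  have h2 : B * ((1 + ‖y‖) ^ (d + 2))⁻¹ ≤ B := by
    calc B * ((1 + ‖y‖) ^ (d + 2))⁻¹ ≤ B * 1 :=
      mul_le_mul_of_nonneg_left one_add_pow_inv_le_one hB0
    _ = B := mul_one B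
  exact ⟨(hB y).1.trans h2, (hB y).2.trans h2⟩

/-- The derivative of the gain term (in convolution form). -/
def Dg (φ ψ : SchwartzMap (Euc d) ℝ) (c : ℝ) (v : Euc d) : Euc d →L[ℝ] ℝ :=
  ∫ u : Euc d, ((ψ (v - u) * ‖u‖) • fderiv ℝ φ (v + c • u)
    + (φ (v + c • u) * ‖u‖) • fderiv ℝ ψ (v - u))

/-- The derivative of the loss integral (in convolution form). -/
def Dk (ψ : SchwartzMap (Euc d) ℝ) (v : Euc d) : Euc d →L[ℝ] ℝ :=
  ∫ u : Euc d, ‖u‖ • fderiv ℝ ψ (v - u)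

lemma keyS (φ ψ : SchwartzMap (Euc d) ℝ) (c : ℝ) (v : Euc d) :
    HasFDerivAt (fun x => ∫ u : Euc d, φ (x + c • u) * ψ (x - u) * ‖u‖) (Dg φ ψ c v) v := by
  obtain ⟨A, hA0, hAb, hAd⟩ := schwartz_pack φ
  obtain ⟨B, hB0, hBb, hBd⟩ := schwartz_pack ψ
  exact key (φ.smooth 1) (ψ.smooth 1) hA0 hB0 hAb hBd c v

lemma keyS_apply (φ ψ : SchwartzMap (Euc d) ℝ) (c : ℝ) (v : Euc d) (e : Euc d) :
    Dg φ ψ c v e = (∫ u : Euc d, fderiv ℝ φ (v + c • u) e * ψ (v - u) * ‖u‖)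
      + ∫ u : Euc d, φ (v + c • u) * fderiv ℝ ψ (v - u) e * ‖u‖ := by
  obtain ⟨A, hA0, hAb, hAd⟩ := schwartz_pack φ
  obtain ⟨B, hB0, hBb, hBd⟩ := schwartz_pack ψ
  have contφ' : Continuous fun y : Euc d => fderiv ℝ φ y e :=
    (ContinuousLinearMap.apply ℝ ℝ e).continuous.comp ((φ.smooth 1).continuous_fderiv (by simp))
  have contψ' : Continuous fun y : Euc d => fderiv ℝ ψ y e :=
    (ContinuousLinearMap.apply ℝ ℝ e).continuous.comp ((ψ.smooth 1).continuous_fderiv (by simp))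
  have inta : Integrable (fun u : Euc d => fderiv ℝ φ (v + c • u) e * ψ (v - u) * ‖u‖) := by
    refine int_aux (φ := fun y => fderiv ℝ φ y e) (ψ := fun y => (ψ y : ℝ)) contφ'
      ψ.continuous (A := A * ‖e‖) (by positivity) hB0 (fun y => ?_) (fun y => (hBd y).1) c v
    calc ‖fderiv ℝ φ y e‖ ≤ ‖fderiv ℝ φ y‖ * ‖e‖ := (fderiv ℝ φ y).le_opNorm e
    _ ≤ A * ‖e‖ := mul_le_mul_of_nonneg_right (hAb y).2 (norm_nonneg e)
  have intb : Integrable (fun u : Euc d => φ (v + c • u) * fderiv ℝ ψ (v - u) e * ‖u‖) := by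
    refine int_aux (φ := fun y => (φ y : ℝ)) (ψ := fun y => fderiv ℝ ψ y e) φ.continuous
      contψ' (A := A) (B := B * ‖e‖) hA0 (by positivity) (fun y => (hAb y).1) (fun y => ?_) c v
    calc ‖fderiv ℝ ψ y e‖ ≤ ‖fderiv ℝ ψ y‖ * ‖e‖ := (fderiv ℝ ψ y).le_opNorm e
    _ ≤ (B * ((1 + ‖y‖) ^ (d + 2))⁻¹) * ‖e‖ :=
        mul_le_mul_of_nonneg_right (hBd y).2 (norm_nonneg e)
    _ = B * ‖e‖ * ((1 + ‖y‖) ^ (d + 2))⁻¹ := by ring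
  rw [Dg, ContinuousLinearMap.integral_apply
    (F'_int (φ.smooth 1) (ψ.smooth 1) hA0 hB0 hAb hBd c v), ← integral_add inta intb]
  congr 1
  funext u
  simp only [ContinuousLinearMap.add_apply, ContinuousLinearMap.smul_apply, smul_eq_mul]
  ring

lemma K_int (ψ : SchwartzMap (Euc d) ℝ) (v : Euc d) :
    Integrable (fun u : Euc d => ‖u‖ • fderiv ℝ ψ (v - u)) := by
  obtain ⟨B, hB0, hBb, hBd⟩ := schwartz_pack ψ
  have := F'_int (φ := fun _ : Euc d => (1:ℝ)) (ψ := fun y => (ψ y : ℝ)) contDiff_const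
    (ψ.smooth 1) zero_le_one hB0 (fun y => ⟨by simp, by simp [fderiv_const]⟩) hBd 0 v
  refine this.congr (Eventually.of_forall fun u => ?_)
  simp [fderiv_const]

lemma keyKS (ψ : SchwartzMap (Euc d) ℝ) (v : Euc d) :
    HasFDerivAt (fun x => ∫ u : Euc d, ψ (x - u) * ‖u‖) (Dk ψ v) v := by
  obtain ⟨B, hB0, hBb, hBd⟩ := schwartz_pack ψ
  have h := key (φ := fun _ : Euc d => (1:ℝ)) (ψ := fun y => (ψ y : ℝ)) contDiff_const
    (ψ.smooth 1) zero_le_one hB0 (fun y => ⟨by simp, by simp [fderiv_const]⟩) hBd 0 v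
  have hfun : (fun x : Euc d => ∫ u : Euc d, (1:ℝ) * ψ (x - u) * ‖u‖)
      = fun x => ∫ u : Euc d, ψ (x - u) * ‖u‖ := by
    funext x; simp
  have hder : (∫ u : Euc d, (((ψ (v - u) : ℝ) * ‖u‖) • fderiv ℝ (fun _ : Euc d => (1:ℝ)) (v + (0:ℝ) • u)
      + ((1:ℝ) * ‖u‖) • fderiv ℝ ψ (v - u))) = Dk ψ v := by
    rw [Dk]; congr 1; funext u; simp [fderiv_const]
  rw [hfun, hder] at h
  exact h

lemma keyKS_apply (ψ : SchwartzMap (Euc d) ℝ) (v : Euc d) (e : Euc d) :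
    Dk ψ v e = ∫ u : Euc d, fderiv ℝ ψ (v - u) e * ‖u‖ := by
  rw [Dk, ContinuousLinearMap.integral_apply (K_int ψ v)]
  congr 1
  funext u
  simp only [ContinuousLinearMap.smul_apply, smul_eq_mul]
  ring


lemma cvar_eq (m n : ℕ) (hn : n ≠ 0) (v u : Euc d) :
    cvar d m n v (v - u) = v + (((m : ℝ) - n) / n) • u := by
  have hn' : (n : ℝ) ≠ 0 := Nat.cast_ne_zero.mpr hn
  rw [cvar, inv_smul_eq_iff₀ hn']
  match_scalars <;> field_simp <;> ring

lemma cov_gain (φ ψ : Euc d → ℝ) (m n : ℕ) (hn : n ≠ 0) (v : Euc d) :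
    (∫ w : Euc d, φ (cvar d m n v w) * ψ w * ‖v - w‖) =
    ∫ u : Euc d, φ (v + (((m : ℝ) - n) / n) • u) * ψ (v - u) * ‖u‖ := by
  rw [← integral_sub_left_eq_self (fun w => φ (cvar d m n v w) * ψ w * ‖v - w‖) volume v]
  congr 1
  funext u
  rw [cvar_eq m n hn, sub_sub_cancel]

lemma cov_loss (ψ : Euc d → ℝ) (v : Euc d) :
    (∫ w : Euc d, ψ w * ‖v - w‖) = ∫ u : Euc d, ψ (v - u) * ‖u‖ := by
  rw [← integral_sub_left_eq_self (fun w => ψ w * ‖v - w‖) volume v]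
  congr 1
  funext u
  rw [sub_sub_cancel]

lemma Q_rw (M : ℕ) (φf ψf : ℕ → Euc d → ℝ) (m : ℕ) (x : Euc d) :
    Qcoag d M φf ψf m x =
      (∑ n ∈ Finset.Ico 1 m, ((m : ℝ) / (n : ℝ)) ^ 2 *
        ∫ u : Euc d, φf n (x + (((m : ℝ) - n) / n) • u) * ψf (m - n) (x - u) * ‖u‖)
      - 2 * ∑ n ∈ Finset.Icc 1 M, φf m x * ∫ u : Euc d, ψf n (x - u) * ‖u‖ := by
  rw [Qcoag]
  congr 1
  · refine Finset.sum_congr rfl fun n hn => ?_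
    rw [cov_gain _ _ m n (by have := (Finset.mem_Ico.mp hn).1; omega)]
  · congr 1
    refine Finset.sum_congr rfl fun n _ => ?_
    rw [cov_loss]

lemma pd_def (i : Fin d) (h : Euc d → ℝ) (v : Euc d) :
    pd d i h v = fderiv ℝ h v (EuclideanSpace.single i 1) := rfl

end helpers

/-- Leibniz rule for the coagulation operator on Schwartz families:
∂_{v_i} Q_m(f,g) = Q_m(∂_i f, g) + Q_m(f, ∂_i g). -/
theorem statement7 (d M : ℕ) (hd : 1 ≤ d) (hM : 1 ≤ M)
    (f g : ℕ → SchwartzMap (Euc d) ℝ) (m : ℕ) (hm : m ∈ Finset.Icc 1 M)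
    (i : Fin d) (v : Euc d) :
    DifferentiableAt ℝ (Qcoag d M (fun n => (f n : Euc d → ℝ)) (fun n => (g n : Euc d → ℝ)) m) v ∧
    pd d i (Qcoag d M (fun n => (f n : Euc d → ℝ)) (fun n => (g n : Euc d → ℝ)) m) v =
      Qcoag d M (fun n => pd d i (f n : Euc d → ℝ)) (fun n => (g n : Euc d → ℝ)) m v +
      Qcoag d M (fun n => (f n : Euc d → ℝ)) (fun n => pd d i (g n : Euc d → ℝ)) m v := by
  classical
  have hQ := fun (φf ψf : ℕ → Euc d → ℝ) (x : Euc d) => Q_rw M φf ψf m x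
  set L : Euc d →L[ℝ] ℝ :=
    (∑ n ∈ Finset.Ico 1 m, ((m : ℝ) / (n : ℝ)) ^ 2 •
        Dg (f n) (g (m - n)) (((m : ℝ) - n) / n) v)
      - (2 : ℝ) • ∑ n ∈ Finset.Icc 1 M,
        ((f m v) • Dk (g n) v
          + (∫ u : Euc d, g n (v - u) * ‖u‖) • fderiv ℝ (f m) v) with hLdef
  have hfd : HasFDerivAt
      (Qcoag d M (fun n => (f n : Euc d → ℝ)) (fun n => (g n : Euc d → ℝ)) m) L v := by
    have hfun : Qcoag d M (fun n => (f n : Euc d → ℝ)) (fun n => (g n : Euc d → ℝ)) m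
        = fun x => (∑ n ∈ Finset.Ico 1 m, ((m : ℝ) / (n : ℝ)) ^ 2 *
            ∫ u : Euc d, f n (x + (((m : ℝ) - n) / n) • u) * g (m - n) (x - u) * ‖u‖)
          - 2 * ∑ n ∈ Finset.Icc 1 M, f m x * ∫ u : Euc d, g n (x - u) * ‖u‖ :=
      funext fun x => hQ _ _ x
    rw [hfun, hLdef]
    apply HasFDerivAt.sub
    · exact HasFDerivAt.fun_sum fun n _ =>
        (keyS (f n) (g (m - n)) (((m : ℝ) - n) / n) v).const_mul _
    · exact (HasFDerivAt.fun_sum fun n _ =>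
        ((f m).differentiable.differentiableAt.hasFDerivAt.mul (keyKS (g n) v))).const_mul 2
  refine ⟨hfd.differentiableAt, ?_⟩
  have hpd : pd d i (Qcoag d M (fun n => (f n : Euc d → ℝ))
      (fun n => (g n : Euc d → ℝ)) m) v = L (EuclideanSpace.single i 1) := by
    rw [pd_def, hfd.fderiv]
  rw [hpd]
  have hLe : L (EuclideanSpace.single i 1) =
      (∑ n ∈ Finset.Ico 1 m, ((m : ℝ) / (n : ℝ)) ^ 2 *
        (Dg (f n) (g (m - n)) (((m : ℝ) - n) / n) v (EuclideanSpace.single i 1)))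
      - 2 * ∑ n ∈ Finset.Icc 1 M,
        (f m v * (Dk (g n) v (EuclideanSpace.single i 1))
          + (∫ u : Euc d, g n (v - u) * ‖u‖) *
            (fderiv ℝ (f m) v (EuclideanSpace.single i 1))) := by
    rw [hLdef]
    simp [ContinuousLinearMap.sub_apply, ContinuousLinearMap.coe_sum', Finset.sum_apply,
      ContinuousLinearMap.smul_apply, ContinuousLinearMap.add_apply, smul_eq_mul]
  rw [hLe]
  simp only [keyS_apply, keyKS_apply]
  rw [hQ (fun n => pd d i (f n : Euc d → ℝ)) (fun n => (g n : Euc d → ℝ)) v,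
    hQ (fun n => (f n : Euc d → ℝ)) (fun n => pd d i (g n : Euc d → ℝ)) v]
  simp only [pd_def]
  simp only [mul_add]
  rw [Finset.sum_add_distrib, Finset.sum_add_distrib]
  have hcomm : (∑ n ∈ Finset.Icc 1 M, (∫ u : Euc d, g n (v - u) * ‖u‖) *
        (fderiv ℝ (f m : Euc d → ℝ) v (EuclideanSpace.single i 1))) =
      ∑ n ∈ Finset.Icc 1 M, (fderiv ℝ (f m : Euc d → ℝ) v (EuclideanSpace.single i 1)) *
        ∫ u : Euc d, g n (v - u) * ‖u‖ :=
    Finset.sum_congr rfl fun n _ => mul_comm _ _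
  rw [hcomm]
  ring
end
end
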